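/- arXiv:1609.03031 — 8 statements merged into one kernel-verified Lean document; each statement's English description precedes it below -/
import Mathlib

section
/- Let N and M be positive definite ternary forms and n a positive integer such that (N, M) is a representable pair by scaling n. Then n·Q_N is represented by M; that is, there exists an injective ℤ-linear map S : ℤ³ → ℤ³ with Q_M(S v) = n·Q_N(v) for all v ∈ ℤ³. -/
open Matrix


/-- A ternary quadratic form `Q(x,y,z) = ax² + by² + cz² + r·yz + s·zx + t·xy`
with integer coefficients. -/
structure TernaryForm where
  a : ℤ
  b : ℤ
  c : ℤ
  r : ℤ
  s : ℤ
  t : ℤ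

/-- Evaluation of a ternary form on `R³` for any commutative ring `R`. -/
def TernaryForm.eval {R : Type*} [CommRing R] (Q : TernaryForm) (v : Fin 3 → R) : R :=
  (Q.a : R) * v 0 ^ 2 + (Q.b : R) * v 1 ^ 2 + (Q.c : R) * v 2 ^ 2 +
    (Q.r : R) * v 1 * v 2 + (Q.s : R) * v 2 * v 0 + (Q.t : R) * v 0 * v 1

/-- A ternary form is positive definite if `Q(v) > 0` for all `v ≠ 0`. -/
def TernaryForm.PosDef (Q : TernaryForm) : Prop :=
  ∀ v : Fin 3 → ℤ, v ≠ 0 → 0 < Q.eval v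

/-- The Gram matrix of a ternary form: the symmetric rational matrix `G`
with `Q(v) = vᵀ G v`. -/
def TernaryForm.gram (Q : TernaryForm) : Matrix (Fin 3) (Fin 3) ℚ :=
  !![(Q.a : ℚ), (Q.t : ℚ) / 2, (Q.s : ℚ) / 2;
     (Q.t : ℚ) / 2, (Q.b : ℚ), (Q.r : ℚ) / 2;
     (Q.s : ℚ) / 2, (Q.r : ℚ) / 2, (Q.c : ℚ)]

/-- The discriminant of a ternary form: the determinant of its Gram matrix. -/
def TernaryForm.disc (Q : TernaryForm) : ℚ := Q.gram.det

/-- `(N, M)` is a representable pair by scaling `n` if `dN = n·dM` and there is a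
`ℤ`-linear map `T : ℤ³ → ℤ³` with `Q_N(T v) = n · Q_M(v)` for all `v`. -/
def RepPair (n : ℕ) (N M : TernaryForm) : Prop :=
  N.disc = (n : ℚ) * M.disc ∧
    ∃ T : (Fin 3 → ℤ) →ₗ[ℤ] (Fin 3 → ℤ), ∀ v, N.eval (T v) = (n : ℤ) * M.eval v

/-- The norm ideal of a subset `K ⊆ ℤ³`: the ideal of `ℤ` generated by `{Q(x) : x ∈ K}`. -/
def TernaryForm.normIdeal (Q : TernaryForm) (K : Set (Fin 3 → ℤ)) : Ideal ℤ :=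
  Ideal.span (Q.eval '' K)

/-- A ternary form is primitive if the norm ideal of `ℤ³` is all of `ℤ`. -/
def TernaryForm.Primitive (Q : TernaryForm) : Prop :=
  Q.normIdeal Set.univ = ⊤

/-- `Λ_p(N) = {x ∈ ℤ³ : Q_N(x + z) ≡ Q_N(z) (mod p) for all z ∈ ℤ³}`. -/
def LambdaSet (p : ℕ) (N : TernaryForm) : Set (Fin 3 → ℤ) :=
  {x | ∀ z : Fin 3 → ℤ, (p : ℤ) ∣ N.eval (x + z) - N.eval z}

/-- `M` is a `Γ_p`-descendant of `N` if there is a subgroup `K ≤ ℤ³` of index `p` with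
norm ideal `pℤ` and a group isomorphism `T : ℤ³ → K` with `Q_N(T v) = p · Q_M(v)`. -/
def GammaDescendant (p : ℕ) (M N : TernaryForm) : Prop :=
  ∃ K : AddSubgroup (Fin 3 → ℤ), K.index = p ∧
    N.normIdeal (K : Set (Fin 3 → ℤ)) = Ideal.span {(p : ℤ)} ∧
    ∃ T : (Fin 3 → ℤ) →+ (Fin 3 → ℤ), Function.Injective T ∧
      Set.range T = (K : Set (Fin 3 → ℤ)) ∧
      ∀ v, N.eval (T v) = (p : ℤ) * M.eval v

/-- `N` is `p`-hyperbolic with exponent `j` if over `ℤ_p` there are a unit `δ` and a basis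
`y₁, y₂, y₃` of `ℤ_p³` with `Q_N(a y₁ + b y₂ + c y₃) = ab + δ p^j c²`. -/
def IsHyperbolic (p : ℕ) [Fact p.Prime] (j : ℕ) (N : TernaryForm) : Prop :=
  ∃ δ : ℤ_[p], IsUnit δ ∧ ∃ B : Module.Basis (Fin 3) ℤ_[p] (Fin 3 → ℤ_[p]),
    ∀ a b c : ℤ_[p],
      N.eval (a • B 0 + b • B 1 + c • B 2) = a * b + δ * (p : ℤ_[p]) ^ j * c ^ 2

/-- Two ternary forms lie in the same genus if they are equivalent over `ℤ_ℓ`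
for every prime `ℓ`. -/
def SameGenus (M M' : TernaryForm) : Prop :=
  ∀ (ℓ : ℕ) [Fact ℓ.Prime], ∃ U : Matrix (Fin 3) (Fin 3) ℤ_[ℓ],
    IsUnit U.det ∧ ∀ v : Fin 3 → ℤ_[ℓ], M'.eval v = M.eval (U.mulVec v)


open Matrix in
private lemma TernaryForm.gram_qf (Q : TernaryForm) (v : Fin 3 → ℚ) :
    v ⬝ᵥ Q.gram.mulVec v =
      (Q.a : ℚ) * v 0 ^ 2 + (Q.b : ℚ) * v 1 ^ 2 + (Q.c : ℚ) * v 2 ^ 2 +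
      (Q.r : ℚ) * v 1 * v 2 + (Q.s : ℚ) * v 2 * v 0 + (Q.t : ℚ) * v 0 * v 1 := by
  simp [TernaryForm.gram, Matrix.mulVec, dotProduct, Fin.sum_univ_three]
  ring

open Matrix in
private lemma TernaryForm.eval_cast (Q : TernaryForm) (w : Fin 3 → ℤ) :
    ((Q.eval w : ℤ) : ℚ) = (fun i => (w i : ℚ)) ⬝ᵥ Q.gram.mulVec (fun i => (w i : ℚ)) := by
  rw [TernaryForm.gram_qf]
  simp only [TernaryForm.eval]
  push_cast
  ring

private lemma TernaryForm.gram_symm (Q : TernaryForm) : Q.gramᵀ = Q.gram := by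
  ext i j
  fin_cases i <;> fin_cases j <;> simp [TernaryForm.gram]

private lemma TernaryForm.eval_smul (Q : TernaryForm) (c : ℤ) (v : Fin 3 → ℤ) :
    Q.eval (c • v) = c ^ 2 * Q.eval v := by
  simp only [TernaryForm.eval, Pi.smul_apply, smul_eq_mul]
  ring

private lemma den_mul_self' (q : ℚ) : (q.den : ℚ) * q = (q.num : ℚ) := by
  rw [mul_comm]
  exact (eq_div_iff (by exact_mod_cast q.den_nz)).1 (Rat.num_div_den q).symm

private lemma TernaryForm.disc_ne_zero (Q : TernaryForm) (hQ : Q.PosDef) : Q.disc ≠ 0 := by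
  intro h0
  obtain ⟨v, hv, hGv⟩ := Matrix.exists_mulVec_eq_zero_iff.2 h0
  set d : ℤ := ∏ j, ((v j).den : ℤ) with hd
  have hden : ∀ j, ((v j).den : ℤ) ≠ 0 := fun j => by exact_mod_cast (v j).den_nz
  set w : Fin 3 → ℤ := fun i => (v i).num * ∏ j ∈ Finset.univ.erase i, ((v j).den : ℤ) with hw
  have hwq : ∀ i, (w i : ℚ) = (d : ℚ) * v i := by
    intro i
    have h1 : (d : ℚ) = ((v i).den : ℚ) * ∏ j ∈ Finset.univ.erase i, ((v j).den : ℚ) := by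
      push_cast [hd]
      rw [← Finset.mul_prod_erase Finset.univ _ (Finset.mem_univ i)]
    rw [hw, h1]
    push_cast
    linear_combination (-∏ j ∈ Finset.univ.erase i, ((v j).den : ℚ)) * den_mul_self' (v i)
  have hwne : w ≠ 0 := by
    intro hweq
    obtain ⟨i, hi⟩ := Function.ne_iff.1 hv
    have h3 : w i = 0 := congrFun hweq i
    rw [hw] at h3
    simp only [mul_eq_zero] at h3
    rcases h3 with h | h
    · exact hi (Rat.num_eq_zero.1 h ▸ rfl)
    · exact (Finset.prod_ne_zero_iff.2 fun j _ => hden j) h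
  have heval0 : ((Q.eval w : ℤ) : ℚ) = 0 := by
    rw [TernaryForm.eval_cast]
    have hvec : (fun i => (w i : ℚ)) = (d : ℚ) • v := by
      funext i; simp [hwq i]
    rw [hvec, Matrix.mulVec_smul, hGv]
    simp
  have hlt := hQ w hwne
  rw [show Q.eval w = 0 from by exact_mod_cast heval0] at hlt
  exact lt_irrefl 0 hlt

open Matrix in
private lemma sym_matrix_ext (X Y : Matrix (Fin 3) (Fin 3) ℚ) (hX : Xᵀ = X) (hY : Yᵀ = Y)
    (h : ∀ v : Fin 3 → ℤ, (fun i => (v i : ℚ)) ⬝ᵥ X.mulVec (fun i => (v i : ℚ)) =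
      (fun i => (v i : ℚ)) ⬝ᵥ Y.mulVec (fun i => (v i : ℚ))) : X = Y := by
  have hX01 : X 1 0 = X 0 1 := by simpa using congrFun (congrFun hX 0) 1
  have hX02 : X 2 0 = X 0 2 := by simpa using congrFun (congrFun hX 0) 2
  have hX12 : X 2 1 = X 1 2 := by simpa using congrFun (congrFun hX 1) 2
  have hY01 : Y 1 0 = Y 0 1 := by simpa using congrFun (congrFun hY 0) 1
  have hY02 : Y 2 0 = Y 0 2 := by simpa using congrFun (congrFun hY 0) 2
  have hY12 : Y 2 1 = Y 1 2 := by simpa using congrFun (congrFun hY 1) 2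
  have e0 := h ![1,0,0]
  have e1 := h ![0,1,0]
  have e2 := h ![0,0,1]
  have e01 := h ![1,1,0]
  have e02 := h ![1,0,1]
  have e12 := h ![0,1,1]
  simp [dotProduct, Matrix.mulVec, Fin.sum_univ_three] at e0 e1 e2 e01 e02 e12
  have h01 : X 0 1 = Y 0 1 := by linarith
  have h02 : X 0 2 = Y 0 2 := by linarith
  have h12 : X 1 2 = Y 1 2 := by linarith
  have h10 : X 1 0 = Y 1 0 := by linarith
  have h20 : X 2 0 = Y 2 0 := by linarith
  have h21 : X 2 1 = Y 2 1 := by linarith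
  ext i j
  fin_cases i <;> fin_cases j <;> assumption

/-- If `(N, M)` is a representable pair by scaling `n`, then `n·Q_N` is
represented by `M` via an injective `ℤ`-linear map. -/
theorem stmt_1 (N M : TernaryForm) (hN : N.PosDef) (hM : M.PosDef) (n : ℕ) (hn : 0 < n)
    (h : RepPair n N M) :
    ∃ S : (Fin 3 → ℤ) →ₗ[ℤ] (Fin 3 → ℤ), Function.Injective S ∧
      ∀ v : Fin 3 → ℤ, M.eval (S v) = (n : ℤ) * N.eval v := by
  classical
  obtain ⟨hdisc, T, hT⟩ := h
  set A := LinearMap.toMatrix' T with hA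
  have hTA : ∀ v, A.mulVec v = T v := fun v => by
    rw [hA, ← Matrix.toLin'_apply, Matrix.toLin'_toMatrix']
  set Aq := A.map (Int.castRingHom ℚ) with hAq
  have hcastmul : ∀ v : Fin 3 → ℤ,
      Aq.mulVec (fun i => (v i : ℚ)) = fun i => ((A.mulVec v) i : ℚ) := by
    intro v; funext i
    simp only [hAq, Matrix.mulVec, dotProduct, Matrix.map_apply, Fin.sum_univ_three,
      eq_intCast]
    push_cast
    ring
  have key : ∀ v : Fin 3 → ℤ,
      (fun i => (v i : ℚ)) ⬝ᵥ (Aqᵀ * N.gram * Aq).mulVec (fun i => (v i : ℚ)) =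
      (fun i => (v i : ℚ)) ⬝ᵥ ((n : ℚ) • M.gram).mulVec (fun i => (v i : ℚ)) := by
    intro v
    have L : (fun i => (v i : ℚ)) ⬝ᵥ (Aqᵀ * N.gram * Aq).mulVec (fun i => (v i : ℚ)) =
        ((N.eval (A.mulVec v) : ℤ) : ℚ) := by
      rw [Matrix.mul_assoc, ← Matrix.mulVec_mulVec, Matrix.dotProduct_mulVec,
        Matrix.vecMul_transpose, ← Matrix.mulVec_mulVec, hcastmul v, ← TernaryForm.eval_cast]
    have R : (fun i => (v i : ℚ)) ⬝ᵥ ((n : ℚ) • M.gram).mulVec (fun i => (v i : ℚ)) =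
        (n : ℚ) * ((M.eval v : ℤ) : ℚ) := by
      rw [Matrix.smul_mulVec, dotProduct_smul, smul_eq_mul,
        ← TernaryForm.eval_cast]
    rw [L, R, hTA v, hT v]
    push_cast
    ring
  have hsymX : (Aqᵀ * N.gram * Aq)ᵀ = Aqᵀ * N.gram * Aq := by
    rw [Matrix.transpose_mul, Matrix.transpose_mul, Matrix.transpose_transpose,
      TernaryForm.gram_symm, ← Matrix.mul_assoc]
  have hsymY : ((n : ℚ) • M.gram)ᵀ = (n : ℚ) • M.gram := by
    rw [Matrix.transpose_smul, TernaryForm.gram_symm]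
  have hmat : Aqᵀ * N.gram * Aq = (n : ℚ) • M.gram :=
    sym_matrix_ext _ _ hsymX hsymY key
  have hdet := congrArg Matrix.det hmat
  rw [Matrix.det_mul, Matrix.det_mul, Matrix.det_transpose, Matrix.det_smul] at hdet
  have hAqdet : Aq.det = ((A.det : ℤ) : ℚ) := (RingHom.map_det (Int.castRingHom ℚ) A).symm
  have hM0 : M.gram.det ≠ 0 := TernaryForm.disc_ne_zero M hM
  have hn0 : (n : ℚ) ≠ 0 := by exact_mod_cast hn.ne'
  have hq2 : (((A.det : ℚ)) ^ 2 - (n : ℚ) ^ 2) * ((n : ℚ) * M.gram.det) = 0 := by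
    have hdet' : ((A.det : ℚ)) * N.gram.det * ((A.det : ℚ)) =
        (n : ℚ) ^ Fintype.card (Fin 3) * M.gram.det := by
      rw [← hAqdet]; exact hdet
    have hdisc' : N.gram.det = (n : ℚ) * M.gram.det := hdisc
    simp only [Fintype.card_fin] at hdet'
    linear_combination hdet' - ((A.det : ℚ)) ^ 2 * hdisc'
  have hd2q : ((A.det : ℚ)) ^ 2 = (n : ℚ) ^ 2 := by
    rcases mul_eq_zero.1 hq2 with h' | h'
    · linarith [sub_eq_zero.1 h']
    · exact absurd h' (mul_ne_zero hn0 hM0)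
  have hd2 : A.det ^ 2 = (n : ℤ) ^ 2 := by exact_mod_cast hd2q
  have hdetne : A.det ≠ 0 := by
    intro h'
    rw [h'] at hd2
    have : (n : ℤ) ^ 2 ≠ 0 := by positivity
    exact this (by linarith)
  have hnz : (n : ℤ) ≠ 0 := by exact_mod_cast hn.ne'
  refine ⟨Matrix.toLin' A.adjugate, ?_, ?_⟩
  · intro x y hxy
    simp only [Matrix.toLin'_apply] at hxy
    have h1 : A.adjugate.mulVec (x - y) = 0 := by
      rw [Matrix.mulVec_sub, hxy, sub_self]
    have h2 : A.det • (x - y) = 0 := by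
      have h3 := congrArg A.mulVec h1
      rwa [Matrix.mulVec_mulVec, Matrix.mul_adjugate, Matrix.smul_mulVec,
        Matrix.one_mulVec, Matrix.mulVec_zero] at h3
    exact sub_eq_zero.1 ((smul_eq_zero.1 h2).resolve_left hdetne)
  · intro v
    have h4 : A.mulVec (A.adjugate.mulVec v) = A.det • v := by
      rw [Matrix.mulVec_mulVec, Matrix.mul_adjugate, Matrix.smul_mulVec,
        Matrix.one_mulVec]
    have h5 := hT (A.adjugate.mulVec v)
    rw [← hTA, h4, TernaryForm.eval_smul, hd2] at h5
    simp only [Matrix.toLin'_apply]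
    apply mul_left_cancel₀ hnz
    linear_combination (-1 : ℤ) * h5
end

section
/- Let n be a square-free positive integer, let N and M be positive definite ternary forms such that (N, M) is a representable pair by scaling n, and let p be a prime dividing n. Then there exists a positive definite ternary form L such that (N, L) is a representable pair by scaling p and (L, M) is a representable pair by scaling n/p. -/
namespace StmtAux
open Matrix

lemma eval_map {R : Type*} [CommRing R] (Q : TernaryForm) (x : Fin 3 → ℤ) :
    Q.eval (fun i => ((x i : ℤ) : R)) = ((Q.eval x : ℤ) : R) := by
  simp only [TernaryForm.eval]; push_cast; ring

lemma mulVec_map {R : Type*} [CommRing R] (A : Matrix (Fin 3) (Fin 3) ℤ) (v : Fin 3 → ℤ) :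
    (A.map (Int.cast : ℤ → R)) *ᵥ (fun i => ((v i : ℤ) : R)) = fun i => (((A *ᵥ v) i : ℤ) : R) := by
  ext i
  simp [Matrix.mulVec, dotProduct, Fin.sum_univ_three]

lemma eval_dot (Q : TernaryForm) (v : Fin 3 → ℚ) :
    Q.eval v = v ⬝ᵥ (Q.gram *ᵥ v) := by
  simp [TernaryForm.eval, TernaryForm.gram, Matrix.mulVec, dotProduct, Fin.sum_univ_three]
  ring

lemma gram_symm (Q : TernaryForm) : Q.gramᵀ = Q.gram := by
  ext i j
  fin_cases i <;> fin_cases j <;> simp [TernaryForm.gram]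

lemma eval_smul (Q : TernaryForm) (c : ℚ) (v : Fin 3 → ℚ) :
    Q.eval (fun i => c * v i) = c ^ 2 * Q.eval v := by
  simp only [TernaryForm.eval]; ring

lemma sym_ext {A B : Matrix (Fin 3) (Fin 3) ℚ} (hA : Aᵀ = A) (hB : Bᵀ = B)
    (h : ∀ v : Fin 3 → ℤ, (fun i => ((v i : ℤ) : ℚ)) ⬝ᵥ (A *ᵥ fun i => ((v i : ℤ) : ℚ))
        = (fun i => ((v i : ℤ) : ℚ)) ⬝ᵥ (B *ᵥ fun i => ((v i : ℤ) : ℚ))) : A = B := by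
  have hA' : ∀ i j, A j i = A i j := fun i j =>
    (Matrix.transpose_apply A i j).symm.trans (congrFun (congrFun hA i) j)
  have hB' : ∀ i j, B j i = B i j := fun i j =>
    (Matrix.transpose_apply B i j).symm.trans (congrFun (congrFun hB i) j)
  have h0 := h ![1,0,0]
  have h1 := h ![0,1,0]
  have h2 := h ![0,0,1]
  have h3 := h ![1,1,0]
  have h4 := h ![1,0,1]
  have h5 := h ![0,1,1]
  simp [dotProduct, Matrix.mulVec, Fin.sum_univ_three] at h0 h1 h2 h3 h4 h5
  ext i j
  fin_cases i <;> fin_cases j <;>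
    simp only [Fin.isValue, Fin.zero_eta, Fin.mk_one, Fin.reduceFinMk] <;>
    linarith [hA' 0 1, hA' 0 2, hA' 1 2, hB' 0 1, hB' 0 2, hB' 1 2]

/-- congruence of Gram matrices from a quadratic identity on integer vectors -/
lemma gram_congr (Q₁ Q₂ : TernaryForm) (P : Matrix (Fin 3) (Fin 3) ℚ) (c : ℚ)
    (h : ∀ v : Fin 3 → ℤ, Q₁.eval (P *ᵥ fun i => ((v i : ℤ) : ℚ))
      = c * Q₂.eval (fun i => ((v i : ℤ) : ℚ))) :
    Pᵀ * Q₁.gram * P = c • Q₂.gram := by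
  apply sym_ext
  · rw [Matrix.transpose_mul, Matrix.transpose_mul, Matrix.transpose_transpose, gram_symm,
      Matrix.mul_assoc]
  · rw [Matrix.transpose_smul, gram_symm]
  · intro v
    set w : Fin 3 → ℚ := fun i => ((v i : ℤ) : ℚ) with hw
    have lhs : w ⬝ᵥ (Pᵀ * Q₁.gram * P) *ᵥ w = (P *ᵥ w) ⬝ᵥ Q₁.gram *ᵥ (P *ᵥ w) := by
      rw [← Matrix.mulVec_mulVec, ← Matrix.mulVec_mulVec, Matrix.dotProduct_mulVec,
        Matrix.vecMul_transpose]
    rw [lhs, ← eval_dot, h v, eval_dot]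
    rw [Matrix.smul_mulVec, dotProduct_smul, smul_eq_mul]

lemma disc_ne_zero (Q : TernaryForm) (hQ : Q.PosDef) : Q.disc ≠ 0 := by
  intro h0
  obtain ⟨v, hv0, hv⟩ := (Matrix.exists_mulVec_eq_zero_iff (M := Q.gram)).mpr h0
  have hQv : Q.eval v = 0 := by
    rw [eval_dot, hv, dotProduct_zero]
  -- clear denominators
  set d : ℤ := ((v 0).den : ℤ) * ((v 1).den : ℤ) * ((v 2).den : ℤ) with hd
  have hden : ∀ i : Fin 3, ((v i).den : ℚ) ≠ 0 := fun i => by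
    exact_mod_cast (Nat.cast_ne_zero (R := ℚ)).mpr (v i).den_ne_zero
  have hd0 : (d : ℚ) ≠ 0 := by
    rw [hd]
    push_cast
    exact mul_ne_zero (mul_ne_zero (hden 0) (hden 1)) (hden 2)
  set w : Fin 3 → ℤ := ![(v 0).num * (((v 1).den : ℤ) * ((v 2).den : ℤ)),
    (v 1).num * (((v 0).den : ℤ) * ((v 2).den : ℤ)),
    (v 2).num * (((v 0).den : ℤ) * ((v 1).den : ℤ))] with hwdef
  have hcast : ∀ i : Fin 3, ((w i : ℤ) : ℚ) = (d : ℚ) * v i := by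
    have e : ∀ i : Fin 3, ((v i).num : ℚ) = v i * ((v i).den : ℚ) := fun i =>
      (div_eq_iff (hden i)).mp (Rat.num_div_den (v i))
    intro i
    fin_cases i <;>
      · simp only [hwdef, hd, Fin.zero_eta, Fin.mk_one, Fin.reduceFinMk, Matrix.cons_val_zero,
          Matrix.cons_val_one, Matrix.head_cons, Matrix.cons_val_two, Matrix.tail_cons,
          Matrix.cons_val_fin_one, Fin.isValue]
        push_cast
        rw [e]
        ring
  have hweval : Q.eval (fun i => ((w i : ℤ) : ℚ)) = 0 := by
    have : (fun i => ((w i : ℤ) : ℚ)) = fun i => (d : ℚ) * v i := funext hcast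
    rw [this, eval_smul, hQv, mul_zero]
  have hwz : Q.eval w = 0 := by
    have := (eval_map (R := ℚ) Q w).symm.trans hweval
    exact_mod_cast this
  have hwne : w ≠ 0 := by
    intro hw
    apply hv0
    funext i
    have : ((w i : ℤ) : ℚ) = 0 := by rw [hw]; simp
    rw [hcast i] at this
    rcases mul_eq_zero.mp this with h | h
    · exact absurd h hd0
    · exact h
  exact absurd hwz (ne_of_gt (hQ w hwne))

lemma eval_mulVec_expand {R : Type*} [CommRing R] (Q : TernaryForm)
    (S : Matrix (Fin 3) (Fin 3) R) (v : Fin 3 → R) :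
    Q.eval (S *ᵥ v) =
      v 0 ^ 2 * Q.eval (fun k => S k 0) + v 1 ^ 2 * Q.eval (fun k => S k 1)
        + v 2 ^ 2 * Q.eval (fun k => S k 2)
        + v 1 * v 2 * (Q.eval (fun k => S k 1 + S k 2) - Q.eval (fun k => S k 1)
            - Q.eval (fun k => S k 2))
        + v 2 * v 0 * (Q.eval (fun k => S k 2 + S k 0) - Q.eval (fun k => S k 2)
            - Q.eval (fun k => S k 0))
        + v 0 * v 1 * (Q.eval (fun k => S k 0 + S k 1) - Q.eval (fun k => S k 0)
            - Q.eval (fun k => S k 1)) := by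
  simp only [TernaryForm.eval, Matrix.mulVec, dotProduct, Fin.sum_univ_three]
  ring

end StmtAux

section Main
open Matrix StmtAux

/-- A representable pair by square-free scaling `n` factors through any
prime `p ∣ n`. -/
theorem stmt_2 (n : ℕ) (hn : 0 < n) (hsf : Squarefree n) (N M : TernaryForm)
    (hN : N.PosDef) (hM : M.PosDef) (h : RepPair n N M)
    (p : ℕ) (hp : p.Prime) (hpn : p ∣ n) :
    ∃ L : TernaryForm, L.PosDef ∧ RepPair p N L ∧ RepPair (n / p) L M := by
  classical
  haveI : Fact p.Prime := ⟨hp⟩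
  haveI : Fact (1 < p) := ⟨hp.one_lt⟩
  obtain ⟨hdisc, T, hT⟩ := h
  have hp0 : (p : ℤ) ≠ 0 := by exact_mod_cast hp.ne_zero
  have hppos : (0 : ℤ) < p := by exact_mod_cast hp.pos
  have hn0 : (n : ℤ) ≠ 0 := by exact_mod_cast hn.ne'
  set m := n / p with hm
  have hnm : n = p * m := (Nat.mul_div_cancel' hpn).symm
  have hm0 : m ≠ 0 := by rintro h0; rw [h0, mul_zero] at hnm; omega
  -- the matrix of T
  set Tm := LinearMap.toMatrix' T with hTmdef
  have hTmv : ∀ v, T v = Tm *ᵥ v := by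
    intro v
    conv_lhs => rw [← Matrix.toLin'_toMatrix' T]
    rfl
  have hTeval : ∀ v : Fin 3 → ℤ, N.eval (Tm *ᵥ v) = (n : ℤ) * M.eval v := fun v => by
    rw [← hTmv]; exact hT v
  -- the lattice Λ = T(ℤ³) + pℤ³
  set F : ((Fin 3 → ℤ) × (Fin 3 → ℤ)) →ₗ[ℤ] (Fin 3 → ℤ) :=
    (Matrix.mulVecLin Tm).comp (LinearMap.fst ℤ _ _) + (p : ℤ) • LinearMap.snd ℤ _ _ with hFdef
  have hF : ∀ vw, F vw = Tm *ᵥ vw.1 + (p : ℤ) • vw.2 := fun vw => rfl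
  set Λ := LinearMap.range F with hΛ
  have memΛ : ∀ x, x ∈ Λ ↔ ∃ v w : Fin 3 → ℤ, Tm *ᵥ v + (p : ℤ) • w = x := by
    intro x
    constructor
    · rintro ⟨⟨v, w⟩, rfl⟩; exact ⟨v, w, (hF (v, w)).symm⟩
    · rintro ⟨v, w, hx⟩; exact ⟨(v, w), by rw [hF]; exact hx⟩
  -- p divides Q_N on Λ
  have key1 : ∀ x ∈ Λ, (p : ℤ) ∣ N.eval x := by
    intro x hx
    obtain ⟨v, w, rfl⟩ := (memΛ x).mp hx
    rw [← ZMod.intCast_zmod_eq_zero_iff_dvd]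
    have e1 : (fun i => (((Tm *ᵥ v + (p : ℤ) • w) i : ℤ) : ZMod p))
        = fun i => (((Tm *ᵥ v) i : ℤ) : ZMod p) := by
      funext i
      simp only [Pi.add_apply, Pi.smul_apply, smul_eq_mul]
      push_cast
      simp [ZMod.natCast_self]
    calc ((N.eval (Tm *ᵥ v + (p : ℤ) • w) : ℤ) : ZMod p)
        = N.eval (fun i => (((Tm *ᵥ v + (p : ℤ) • w) i : ℤ) : ZMod p)) :=
          (StmtAux.eval_map _ _).symm
      _ = N.eval (fun i => (((Tm *ᵥ v) i : ℤ) : ZMod p)) := by rw [e1]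
      _ = ((N.eval (Tm *ᵥ v) : ℤ) : ZMod p) := StmtAux.eval_map _ _
      _ = (((n : ℤ) * M.eval v : ℤ) : ZMod p) := by rw [hTeval]
      _ = 0 := by
          push_cast
          rw [(ZMod.natCast_eq_zero_iff n p).mpr hpn, zero_mul]
  -- Smith normal form of Λ
  obtain ⟨k, snf⟩ := Λ.smithNormalForm (Pi.basisFun ℤ (Fin 3))
  haveI : Module.Finite ℤ Λ := Module.Finite.of_basis snf.bN
  have hk3 : k = 3 := by
    have hle : k ≤ 3 := by simpa using Fintype.card_le_of_embedding snf.f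
    have φmem : ∀ x : Fin 3 → ℤ, (p : ℤ) • x ∈ Λ := fun x =>
      (memΛ _).mpr ⟨0, x, by simp⟩
    have hinj : Function.Injective
        (LinearMap.codRestrict Λ ((p : ℤ) • LinearMap.id) φmem) := by
      intro x y hxy
      have hxy' : (p : ℤ) • x = (p : ℤ) • y := congrArg Subtype.val hxy
      exact smul_right_injective _ hp0 hxy'
    have hge := LinearMap.finrank_le_finrank_of_injective hinj
    rw [Module.finrank_pi, Module.finrank_eq_card_basis snf.bN] at hge
    simp at hge
    omega
  subst hk3
  set σ : Fin 3 ≃ Fin 3 :=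
    Equiv.ofBijective snf.f (Finite.injective_iff_bijective.mp snf.f.injective) with hσdef
  have hfσ : ∀ i, snf.f i = σ i := fun i => rfl
  set g := σ.symm with hgdef
  -- each elementary divisor divides p
  have hadvd : ∀ i, snf.a i ∣ (p : ℤ) := by
    intro i
    have hpmem : (p : ℤ) • (snf.bM (snf.f i)) ∈ Λ :=
      (memΛ _).mpr ⟨0, snf.bM (snf.f i), by simp⟩
    have h2 := snf.repr_apply_embedding_eq_repr_smul (m := (⟨_, hpmem⟩ : Λ)) (i := i)
    simp only [_root_.map_smul, Finsupp.smul_apply, smul_eq_mul, Module.Basis.repr_self,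
      Finsupp.single_eq_same, mul_one] at h2
    exact ⟨_, h2⟩
  have hna : ∀ i, (snf.a i).natAbs = 1 ∨ (snf.a i).natAbs = p := fun i =>
    (Nat.dvd_prime hp).mp (by simpa using Int.natAbs_dvd_natAbs.mpr (hadvd i))
  -- the matrices S, A, U
  set Scol : Fin 3 → (Fin 3 → ℤ) := fun j => (snf.bN (g j) : Fin 3 → ℤ) with hScoldef
  set S : Matrix (Fin 3) (Fin 3) ℤ := Matrix.of fun k j => Scol j k with hSdef
  have hSmemcol : ∀ j, Scol j ∈ Λ := fun j => (snf.bN (g j)).2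
  have hScol : ∀ j, Scol j = snf.a (g j) • snf.bM j := by
    intro j
    show (snf.bN (g j) : Fin 3 → ℤ) = _
    rw [snf.snf (g j), hfσ, Equiv.apply_symm_apply]
  set A : Matrix (Fin 3) (Fin 3) ℤ := Matrix.of fun k j => snf.bM j k with hAdef
  have hSA : S = A * Matrix.diagonal (fun j => snf.a (g j)) := by
    ext k j
    rw [Matrix.mul_diagonal]
    show Scol j k = A k j * snf.a (g j)
    rw [hScol]
    show (snf.a (g j) • snf.bM j) k = snf.bM j k * snf.a (g j)
    simp [mul_comm]
  have hAdet : IsUnit A.det := by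
    have hAeq : A = (Pi.basisFun ℤ (Fin 3)).toMatrix snf.bM := by
      ext i j
      rw [Module.Basis.toMatrix_apply, Pi.basisFun_repr]
      rfl
    rw [hAeq]
    haveI := Module.Basis.invertibleToMatrix (Pi.basisFun ℤ (Fin 3)) snf.bM
    exact Matrix.isUnit_det_of_invertible _
  have hdetA2 : A.det ^ 2 = 1 := by
    rcases Int.isUnit_iff.mp hAdet with h' | h' <;> rw [h'] <;> ring
  have hdetS : S.det = A.det * ∏ i, snf.a i := by
    rw [hSA, Matrix.det_mul, Matrix.det_diagonal, Equiv.prod_comp g snf.a]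
  have hTcol : ∀ j : Fin 3, Tm *ᵥ (Pi.single j 1) ∈ Λ := fun j =>
    (memΛ _).mpr ⟨Pi.single j 1, 0, by simp⟩
  set colT : Fin 3 → Λ := fun j => ⟨Tm *ᵥ Pi.single j 1, hTcol j⟩ with hcolTdef
  set U : Matrix (Fin 3) (Fin 3) ℤ := Matrix.of fun l j => snf.bN.repr (colT j) (g l) with hUdef
  have hSU : S * U = Tm := by
    ext i j
    rw [Matrix.mul_apply]
    have hsum : ∑ l, S i l * U l j
        = ∑ idx, snf.bN.repr (colT j) idx * (snf.bN idx : Fin 3 → ℤ) i := by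
      apply Fintype.sum_equiv g (fun l => S i l * U l j)
        (fun idx => snf.bN.repr (colT j) idx * (snf.bN idx : Fin 3 → ℤ) i)
      intro l
      exact mul_comm (S i l) (U l j)
    rw [hsum]
    have hb := snf.bN.sum_repr (colT j)
    have hb' := congrArg (fun z : Λ => (z : Fin 3 → ℤ) i) hb
    simp only [AddSubmonoidClass.coe_finset_sum, Finset.sum_apply, SetLike.val_smul,
      Pi.smul_apply, smul_eq_mul] at hb'
    rw [hb']
    show (Tm *ᵥ Pi.single j 1) i = Tm i j
    simp [Matrix.mulVec_single]
  have hdetTmSU : S.det * U.det = Tm.det := by rw [← Matrix.det_mul, hSU]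
  -- determinant of Tm is ± n
  have hMdisc : M.disc ≠ 0 := StmtAux.disc_ne_zero M hM
  have hTgram := StmtAux.gram_congr N M (Tm.map (Int.cast : ℤ → ℚ)) (n : ℚ) (by
    intro v
    rw [StmtAux.mulVec_map, StmtAux.eval_map, StmtAux.eval_map, hTeval]
    push_cast
    ring)
  have hdetTm2 : (Tm.det : ℚ) ^ 2 * N.disc = (n : ℚ) ^ 3 * M.disc := by
    have hcongr := congrArg Matrix.det hTgram
    rw [Matrix.det_mul, Matrix.det_mul, Matrix.det_transpose, Matrix.det_smul] at hcongr
    have hdm : (Tm.map (Int.cast : ℤ → ℚ)).det = ((Tm.det : ℤ) : ℚ) :=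
      ((Int.castRingHom ℚ).map_det Tm).symm
    rw [hdm] at hcongr
    simp only [Fintype.card_fin] at hcongr
    calc (Tm.det : ℚ) ^ 2 * N.disc = (((Tm.det : ℤ) : ℚ) * N.gram.det) * ((Tm.det : ℤ) : ℚ) := by
          unfold TernaryForm.disc; push_cast; ring
      _ = (n : ℚ) ^ 3 * M.disc := by rw [hcongr]; unfold TernaryForm.disc; ring
  have hdetTmsq : Tm.det ^ 2 = (n : ℤ) ^ 2 := by
    have hq : ((Tm.det : ℚ) ^ 2 * (n : ℚ)) * M.disc = (((n : ℚ) ^ 2) * (n : ℚ)) * M.disc := by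
      have : (Tm.det : ℚ) ^ 2 * ((n : ℚ) * M.disc) = (n : ℚ) ^ 3 * M.disc := by
        rw [← hdisc]; exact hdetTm2
      calc ((Tm.det : ℚ) ^ 2 * (n : ℚ)) * M.disc
          = (Tm.det : ℚ) ^ 2 * ((n : ℚ) * M.disc) := by ring
        _ = (n : ℚ) ^ 3 * M.disc := this
        _ = (((n : ℚ) ^ 2) * (n : ℚ)) * M.disc := by ring
    have hq2 := mul_right_cancel₀ hMdisc hq
    have hn0' : (n : ℚ) ≠ 0 := by exact_mod_cast hn.ne'
    have hq3 := mul_right_cancel₀ hn0' hq2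
    exact_mod_cast hq3
  have hdetTm : Tm.det = (n : ℤ) ∨ Tm.det = -(n : ℤ) := by
    have h' : (Tm.det - (n : ℤ)) * (Tm.det + (n : ℤ)) = 0 := by linear_combination hdetTmsq
    rcases mul_eq_zero.mp h' with h' | h'
    · left; linarith
    · right; linarith
  -- the product of the elementary divisors
  set P3 : ℤ := ∏ i, snf.a i with hP3def
  have hP3dvd : P3 ∣ (n : ℤ) := by
    have hdvd : P3 ∣ Tm.det := ⟨A.det * U.det, by rw [← hdetTmSU, hdetS]; ring⟩
    rcases hdetTm with h' | h'
    · rwa [h'] at hdvd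
    · rw [h'] at hdvd; exact (dvd_neg).mp hdvd
  have hP3natdvd : P3.natAbs ∣ n := by
    have := Int.natAbs_dvd_natAbs.mpr hP3dvd
    simpa using this
  have hP3abs : P3.natAbs = (snf.a 0).natAbs * (snf.a 1).natAbs * (snf.a 2).natAbs := by
    rw [hP3def, Fin.prod_univ_three, Int.natAbs_mul, Int.natAbs_mul]
  -- not all elementary divisors are units
  have hnotall : ¬((snf.a 0).natAbs = 1 ∧ (snf.a 1).natAbs = 1 ∧ (snf.a 2).natAbs = 1) := by
    rintro ⟨ha0, ha1, ha2⟩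
    have haunit : ∀ i : Fin 3, snf.a i * snf.a i = 1 := by
      intro i
      have h1 : (snf.a i).natAbs = 1 := by fin_cases i <;> assumption
      rcases Int.natAbs_eq (snf.a i) with h' | h' <;> rw [h', h1] <;> ring
    have hbM : ∀ j, snf.bM j ∈ Λ := by
      intro j
      have hj : snf.bM j = snf.a (g j) • (snf.bN (g j) : Fin 3 → ℤ) := by
        rw [snf.snf (g j), hfσ, Equiv.apply_symm_apply, smul_smul, haunit, one_smul]
      rw [hj]
      exact Submodule.smul_mem Λ _ (snf.bN (g j)).2
    have htop : ∀ x : Fin 3 → ℤ, x ∈ Λ := by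
      intro x
      have hx := snf.bM.sum_repr x
      rw [← hx]
      exact Submodule.sum_mem _ fun i _ => Submodule.smul_mem _ _ (hbM i)
    set Tq : Matrix (Fin 3) (Fin 3) (ZMod p) := Tm.map (Int.cast : ℤ → ZMod p) with hTqdef
    have hchoose : ∀ j : Fin 3, ∃ v w : Fin 3 → ℤ,
        Tm *ᵥ v + (p : ℤ) • w = Pi.single j 1 := fun j => (memΛ _).mp (htop _)
    choose vv ww hvw using hchoose
    set B : Matrix (Fin 3) (Fin 3) (ZMod p) :=
      Matrix.of fun k j => ((vv j k : ℤ) : ZMod p) with hBdef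
    have hTqB : Tq * B = 1 := by
      ext i j
      rw [Matrix.mul_apply, Matrix.one_apply]
      have hs : ∑ k, Tq i k * B k j = (((Tm *ᵥ vv j) i : ℤ) : ZMod p) := by
        simp only [hTqdef, hBdef, Matrix.map_apply, Matrix.of_apply, Matrix.mulVec, dotProduct]
        push_cast
        rfl
      rw [hs]
      have h2 : (Tm *ᵥ vv j) i = (Pi.single j 1 : Fin 3 → ℤ) i - (p : ℤ) * ww j i := by
        have h3 := congrFun (hvw j) i
        simp only [Pi.add_apply, Pi.smul_apply, smul_eq_mul] at h3
        linarith
      rw [h2]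
      push_cast [Pi.single_apply]
      simp [ZMod.natCast_self, apply_ite]
    have hdet1 : Tq.det * B.det = 1 := by rw [← Matrix.det_mul, hTqB, Matrix.det_one]
    have hTq0 : Tq.det = 0 := by
      have hTqd : Tq.det = ((Tm.det : ℤ) : ZMod p) :=
        ((Int.castRingHom (ZMod p)).map_det Tm).symm
      rw [hTqd]
      have hnz : ((n : ℕ) : ZMod p) = 0 := (ZMod.natCast_eq_zero_iff n p).mpr hpn
      rcases hdetTm with h' | h' <;> rw [h'] <;> push_cast <;> simp [hnz]
    rw [hTq0, zero_mul] at hdet1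
    exact zero_ne_one hdet1
  -- exactly one elementary divisor is ±p
  have hP3p : P3.natAbs = p := by
    have hsq : ¬(p * p ∣ n) := by
      intro hd
      exact hp.one_lt.ne' (Nat.isUnit_iff.mp (hsf p hd))
    rw [hP3abs] at hP3natdvd ⊢
    rcases hna 0 with h0 | h0 <;> rcases hna 1 with h1 | h1 <;> rcases hna 2 with h2 | h2 <;>
      rw [h0, h1, h2] at hP3natdvd ⊢
    · exact absurd ⟨h0, h1, h2⟩ hnotall
    · omega
    · omega
    · exact absurd (dvd_trans (⟨1, by ring⟩ : p * p ∣ 1 * p * p) hP3natdvd) hsq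
    · omega
    · exact absurd (dvd_trans (⟨1, by ring⟩ : p * p ∣ p * 1 * p) hP3natdvd) hsq
    · exact absurd (dvd_trans (⟨1, by ring⟩ : p * p ∣ p * p * 1) hP3natdvd) hsq
    · exact absurd (dvd_trans (⟨p, by ring⟩ : p * p ∣ p * p * p) hP3natdvd) hsq
  have hP3sq : P3 ^ 2 = (p : ℤ) ^ 2 := by
    rcases Int.natAbs_eq P3 with h' | h' <;> rw [h', hP3p] <;> push_cast <;> ring
  have hdetS2 : S.det ^ 2 = (p : ℤ) ^ 2 := by
    rw [hdetS, mul_pow, hdetA2, one_mul]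
    exact hP3sq
  have hdetS0 : S.det ≠ 0 := by
    intro h'
    rw [h'] at hdetS2
    simp only [ne_eq, OfNat.ofNat_ne_zero, not_false_eq_true, zero_pow] at hdetS2
    exact (pow_ne_zero 2 hp0) hdetS2.symm
  -- dividing the restricted form by p : the form L
  have hdvd0 : (p : ℤ) ∣ N.eval (Scol 0) := key1 _ (hSmemcol 0)
  have hdvd1 : (p : ℤ) ∣ N.eval (Scol 1) := key1 _ (hSmemcol 1)
  have hdvd2 : (p : ℤ) ∣ N.eval (Scol 2) := key1 _ (hSmemcol 2)
  have hdvd12 : (p : ℤ) ∣ N.eval (Scol 1 + Scol 2) - N.eval (Scol 1) - N.eval (Scol 2) :=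
    dvd_sub (dvd_sub (key1 _ (Submodule.add_mem Λ (hSmemcol 1) (hSmemcol 2))) hdvd1) hdvd2
  have hdvd20 : (p : ℤ) ∣ N.eval (Scol 2 + Scol 0) - N.eval (Scol 2) - N.eval (Scol 0) :=
    dvd_sub (dvd_sub (key1 _ (Submodule.add_mem Λ (hSmemcol 2) (hSmemcol 0))) hdvd2) hdvd0
  have hdvd01 : (p : ℤ) ∣ N.eval (Scol 0 + Scol 1) - N.eval (Scol 0) - N.eval (Scol 1) :=
    dvd_sub (dvd_sub (key1 _ (Submodule.add_mem Λ (hSmemcol 0) (hSmemcol 1))) hdvd0) hdvd1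
  obtain ⟨La, hLa⟩ := hdvd0
  obtain ⟨Lb, hLb⟩ := hdvd1
  obtain ⟨Lc, hLc⟩ := hdvd2
  obtain ⟨Lr, hLr⟩ := hdvd12
  obtain ⟨Ls, hLs⟩ := hdvd20
  obtain ⟨Lt, hLt⟩ := hdvd01
  set L : TernaryForm := { a := La, b := Lb, c := Lc, r := Lr, s := Ls, t := Lt } with hLdef
  -- the key identity
  have hNL : ∀ v : Fin 3 → ℤ, N.eval (S *ᵥ v) = (p : ℤ) * L.eval v := by
    intro v
    rw [StmtAux.eval_mulVec_expand]
    have c0 : (fun k => S k 0) = Scol 0 := rfl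
    have c1 : (fun k => S k 1) = Scol 1 := rfl
    have c2 : (fun k => S k 2) = Scol 2 := rfl
    have c12 : (fun k => S k 1 + S k 2) = Scol 1 + Scol 2 := rfl
    have c20 : (fun k => S k 2 + S k 0) = Scol 2 + Scol 0 := rfl
    have c01 : (fun k => S k 0 + S k 1) = Scol 0 + Scol 1 := rfl
    rw [c0, c1, c2, c12, c20, c01, hLr, hLs, hLt, hLa, hLb, hLc]
    show _ = (p : ℤ) * ((L.a : ℤ) * v 0 ^ 2 + (L.b : ℤ) * v 1 ^ 2 + (L.c : ℤ) * v 2 ^ 2 +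
      (L.r : ℤ) * v 1 * v 2 + (L.s : ℤ) * v 2 * v 0 + (L.t : ℤ) * v 0 * v 1)
    have ea : (L.a : ℤ) = La := by rw [hLdef]
    have eb : (L.b : ℤ) = Lb := by rw [hLdef]
    have ec : (L.c : ℤ) = Lc := by rw [hLdef]
    have er : (L.r : ℤ) = Lr := by rw [hLdef]
    have es : (L.s : ℤ) = Ls := by rw [hLdef]
    have et : (L.t : ℤ) = Lt := by rw [hLdef]
    rw [ea, eb, ec, er, es, et]
    ring
  -- L is positive definite
  have hLpos : L.PosDef := by
    intro v hv
    have hSv : S *ᵥ v ≠ 0 := by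
      intro h0
      apply hv
      have h1 : (S.adjugate * S) *ᵥ v = 0 := by
        rw [← Matrix.mulVec_mulVec, h0, Matrix.mulVec_zero]
      rw [Matrix.adjugate_mul] at h1
      funext i
      have h2 := congrFun h1 i
      rw [Matrix.smul_mulVec, Matrix.one_mulVec] at h2
      have h3 : S.det * v i = 0 := h2
      rcases mul_eq_zero.mp h3 with h' | h'
      · exact absurd h' hdetS0
      · exact h'
    have hpos := hN _ hSv
    rw [hNL] at hpos
    by_contra hc
    push_neg at hc
    exact absurd hpos (not_lt.mpr (mul_nonpos_iff.mpr (Or.inl ⟨hppos.le, hc⟩)))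
  -- Gram/disc relations
  have hSgram := StmtAux.gram_congr N L (S.map (Int.cast : ℤ → ℚ)) (p : ℚ) (by
    intro v
    rw [StmtAux.mulVec_map, StmtAux.eval_map, StmtAux.eval_map, hNL]
    push_cast
    ring)
  have hdiscNL : N.disc = (p : ℚ) * L.disc := by
    have hcongr := congrArg Matrix.det hSgram
    rw [Matrix.det_mul, Matrix.det_mul, Matrix.det_transpose, Matrix.det_smul] at hcongr
    have hdm : (S.map (Int.cast : ℤ → ℚ)).det = ((S.det : ℤ) : ℚ) :=
      ((Int.castRingHom ℚ).map_det S).symm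
    rw [hdm] at hcongr
    simp only [Fintype.card_fin] at hcongr
    have hS2 : ((S.det : ℤ) : ℚ) ^ 2 = (p : ℚ) ^ 2 := by exact_mod_cast hdetS2
    have hp0' : (p : ℚ) ≠ 0 := by exact_mod_cast hp.ne_zero
    have key : (p : ℚ) ^ 2 * N.disc = (p : ℚ) ^ 2 * ((p : ℚ) * L.disc) := by
      calc (p : ℚ) ^ 2 * N.disc = ((S.det : ℤ) : ℚ) * N.gram.det * ((S.det : ℤ) : ℚ) := by
            unfold TernaryForm.disc; rw [← hS2]; ring
        _ = (p : ℚ) ^ 3 * L.gram.det := hcongr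
        _ = (p : ℚ) ^ 2 * ((p : ℚ) * L.disc) := by unfold TernaryForm.disc; ring
    exact mul_left_cancel₀ (pow_ne_zero 2 hp0') key
  have hdiscLM : L.disc = (m : ℚ) * M.disc := by
    have hp0' : (p : ℚ) ≠ 0 := by exact_mod_cast hp.ne_zero
    apply mul_left_cancel₀ hp0'
    rw [← hdiscNL, hdisc, hnm]
    push_cast
    ring
  -- the eval identity for U
  have hLM : ∀ v : Fin 3 → ℤ, L.eval (U *ᵥ v) = (m : ℤ) * M.eval v := by
    intro v
    apply mul_left_cancel₀ hp0
    rw [← hNL, Matrix.mulVec_mulVec, hSU, hTeval, hnm]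
    push_cast
    ring
  refine ⟨L, hLpos, ⟨hdiscNL, Matrix.mulVecLin S, fun v => ?_⟩,
    ⟨hdiscLM, Matrix.mulVecLin U, fun v => ?_⟩⟩
  · rw [Matrix.mulVecLin_apply]; exact hNL v
  · rw [Matrix.mulVecLin_apply]; exact hLM v
end Main
end

section
/- Let p and q be distinct primes, and let N be a primitive positive definite ternary form which is p-hyperbolic with exponent m+1 and q-hyperbolic with exponent m′+1 for some integers m, m′ ≥ 0. If M is a Γ_p-descendant of N and S is a Γ_q-descendant of M, then there exists a Γ_q-descendant M′ of N such that S is a Γ_p-descendant of M′. -/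
lemma eval_lincomb (Q : TernaryForm) (x y z : Fin 3 → ℤ) (a b c : ℤ) :
    Q.eval (a • x + b • y + c • z) =
      a^2 * Q.eval x + b^2 * Q.eval y + c^2 * Q.eval z +
      a*b*(Q.eval (x+y) - Q.eval x - Q.eval y) +
      b*c*(Q.eval (y+z) - Q.eval y - Q.eval z) +
      c*a*(Q.eval (z+x) - Q.eval z - Q.eval x) := by
  simp only [TernaryForm.eval, Pi.add_apply, Pi.smul_apply, smul_eq_mul]
  ring

lemma eval_zsmul (Q : TernaryForm) (n : ℤ) (x : Fin 3 → ℤ) :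
    Q.eval (n • x) = n^2 * Q.eval x := by
  simp only [TernaryForm.eval, Pi.smul_apply, smul_eq_mul]; ring

lemma span_mul_image (n : ℤ) (s : Set ℤ) :
    Ideal.span ((fun t => n * t) '' s) = Ideal.span {n} * Ideal.span s := by
  rw [Ideal.span_mul_span', Set.singleton_mul]

lemma ideal_cancel (n : ℤ) (hn : n ≠ 0) (I : Ideal ℤ) (h : Ideal.span {n} * I = Ideal.span {n}) :
    I = ⊤ := by
  have h0 : Ideal.span {n} ≠ 0 := by
    simpa [Ideal.span_singleton_eq_bot] using hn
  refine mul_left_cancel₀ h0 ?_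
  rw [h, Ideal.mul_top]

lemma torsion_index {G : Type*} [AddCommGroup G] (p q : ℕ) [hp : Fact p.Prime] [hq : Fact q.Prime]
    (hpq : p ≠ q) (hG : Nat.card G = p * q) :
    ((zsmulAddGroupHom (p : ℤ) : G →+ G).ker).index = q := by
  have hG0 : Nat.card G ≠ 0 := by
    rw [hG]; exact Nat.mul_ne_zero hp.out.ne_zero hq.out.ne_zero
  haveI : Finite G := Nat.finite_of_card_ne_zero hG0
  haveI : Fintype G := Fintype.ofFinite G
  haveI : ∀ (K : AddSubgroup G), Fintype K := fun K => Fintype.ofFinite K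
  set H := ((zsmulAddGroupHom (p : ℤ) : G →+ G).ker) with hH
  have hmem : ∀ x : G, x ∈ H ↔ p • x = 0 := by
    intro x
    simp [hH, AddMonoidHom.mem_ker, zsmulAddGroupHom_apply, natCast_zsmul]
  have hcmi : Nat.card H * H.index = Nat.card G := H.card_mul_index
  have hdvd : Nat.card H ∣ p * q := ⟨H.index, by rw [← hG, hcmi]⟩
  have hple : p ∣ Nat.card H := by
    obtain ⟨x, hx⟩ := exists_prime_addOrderOf_dvd_card (G := G) p
      (by rw [← Nat.card_eq_fintype_card, hG]; exact Dvd.intro q rfl)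
    have hxH : x ∈ H := by
      rw [hmem, ← hx]
      exact addOrderOf_nsmul_eq_zero x
    have : addOrderOf (⟨x, hxH⟩ : H) = p := by
      rwa [← AddSubgroup.addOrderOf_coe]
    rw [← this, Nat.card_eq_fintype_card]
    exact addOrderOf_dvd_card
  have hqnot : ¬ q ∣ Nat.card H := by
    intro hqd
    obtain ⟨y, hy⟩ := exists_prime_addOrderOf_dvd_card (G := H) q
      (by rwa [← Nat.card_eq_fintype_card])
    have hpy : p • y = 0 := by
      have := (hmem (y : G)).mp y.2
      ext
      simpa using congrArg id this
    have : addOrderOf y ∣ p := addOrderOf_dvd_of_nsmul_eq_zero hpy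
    rw [hy] at this
    exact hpq ((Nat.prime_dvd_prime_iff_eq hq.out hp.out).mp this).symm
  have hcard : Nat.card H = p := by
    obtain ⟨m, hm⟩ := hple
    have hmq : m ∣ q := by
      have h2 := hdvd
      rw [hm, mul_dvd_mul_iff_left (a := p) hp.out.ne_zero] at h2
      exact h2
    rcases (Nat.Prime.eq_one_or_self_of_dvd hq.out m hmq) with h1 | h1
    · rw [hm, h1, mul_one]
    · exact absurd (by rw [hm, h1]; exact ⟨p, mul_comm p q⟩) hqnot
  have : p * H.index = p * q := by rw [← hcard, hcmi, hG, hcard]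
  exact Nat.eq_of_mul_eq_mul_left hp.out.pos this

set_option maxHeartbeats 2000000 in
/-- For distinct primes `p, q` and `N` both `p`- and `q`-hyperbolic with
positive exponents, `Γ_p`- and `Γ_q`-descendants can be exchanged. -/
theorem stmt_4 (p q : ℕ) [Fact p.Prime] [Fact q.Prime] (hpq : p ≠ q)
    (N : TernaryForm) (hN : N.PosDef) (hNprim : N.Primitive)
    (m m' : ℕ) (hhp : IsHyperbolic p (m + 1) N) (hhq : IsHyperbolic q (m' + 1) N)
    (M S : TernaryForm) (hM : M.PosDef) (hS : S.PosDef)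
    (h1 : GammaDescendant p M N) (h2 : GammaDescendant q S M) :
    ∃ M' : TernaryForm, M'.PosDef ∧ GammaDescendant q M' N ∧ GammaDescendant p S M' := by
    classical
  have hp : p.Prime := Fact.out
  have hq : q.Prime := Fact.out
  have hqZ : Prime (q : ℤ) := Nat.prime_iff_prime_int.mp hq
  have hq0 : (q : ℤ) ≠ 0 := by exact_mod_cast hq.ne_zero
  obtain ⟨K₁, hK₁i, hK₁n, T₁, hT₁inj, hT₁r, hT₁⟩ := h1
  obtain ⟨K₂, hK₂i, hK₂n, T₂, hT₂inj, hT₂r, hT₂⟩ := h2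
  set L : (Fin 3 → ℤ) →+ (Fin 3 → ℤ) := T₁.comp T₂ with hLdef
  have hLinj : Function.Injective L := hT₁inj.comp hT₂inj
  have hLeval : ∀ v, N.eval (L v) = (p : ℤ) * ((q : ℤ) * S.eval v) := by
    intro v
    show N.eval (T₁ (T₂ v)) = _
    rw [hT₁, hT₂]
  set J : AddSubgroup (Fin 3 → ℤ) := L.range with hJdef
  have hmemJ : ∀ x, x ∈ J ↔ ∃ v, L v = x := fun x => Iff.rfl
  -- index of J
  have hT₁range : T₁.range = K₁ := SetLike.ext' (by rw [AddMonoidHom.coe_range, hT₁r])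
  have hJmap : J = K₂.map T₁ := by
    ext x
    simp only [AddSubgroup.mem_map]
    constructor
    · rintro ⟨v, rfl⟩
      exact ⟨T₂ v, by rw [← SetLike.mem_coe, ← hT₂r]; exact ⟨v, rfl⟩, rfl⟩
    · rintro ⟨y, hy, rfl⟩
      rw [← SetLike.mem_coe, ← hT₂r] at hy
      obtain ⟨v, rfl⟩ := hy
      exact ⟨v, rfl⟩
  have hJi : J.index = q * p := by
    rw [hJmap, AddSubgroup.index_map, (AddMonoidHom.ker_eq_bot_iff T₁).mpr hT₁inj, sup_bot_eq,
      hT₁range, hK₂i, hK₁i]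
  -- the middle lattice K'
  set π : (Fin 3 → ℤ) →+ ((Fin 3 → ℤ) ⧸ J) := QuotientAddGroup.mk' J with hπdef
  set K' : AddSubgroup (Fin 3 → ℤ) :=
    ((zsmulAddGroupHom (p : ℤ)).ker).comap π with hK'def
  have hmemK' : ∀ x, x ∈ K' ↔ (p : ℤ) • x ∈ J := by
    intro x
    simp only [hK'def, AddSubgroup.mem_comap, AddMonoidHom.mem_ker, zsmulAddGroupHom_apply]
    rw [← map_zsmul π (p : ℤ) x]
    exact QuotientAddGroup.eq_zero_iff _
  have hGcard : Nat.card ((Fin 3 → ℤ) ⧸ J) = p * q := by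
    have : J.index = Nat.card ((Fin 3 → ℤ) ⧸ J) := rfl
    rw [← this, hJi, mul_comm]
  have hK'i : K'.index = q := by
    rw [hK'def, AddSubgroup.index_comap_of_surjective _ (QuotientAddGroup.mk'_surjective J)]
    exact torsion_index p q hpq hGcard
  have hJK' : J ≤ K' := fun x hx => (hmemK' x).mpr (J.zsmul_mem hx _)
  have hqmemK' : ∀ x : Fin 3 → ℤ, (q : ℤ) • x ∈ K' := by
    intro x
    rw [hmemK', smul_smul]
    have h := J.nsmul_index_mem x
    rw [hJi] at h
    have e : ((p : ℤ) * (q : ℤ)) • x = (q * p) • x := by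
      rw [← natCast_zsmul]
      congr 1
      push_cast
      ring
    rw [e]
    exact h
  -- K' as a submodule, with a basis
  set K'ₛ : Submodule ℤ (Fin 3 → ℤ) := AddSubgroup.toIntSubmodule K' with hK'ₛdef
  have hmemK'ₛ : ∀ x, x ∈ K'ₛ ↔ x ∈ K' := fun x => Iff.rfl
  obtain ⟨n, B₀⟩ := Submodule.basisOfPid (Pi.basisFun ℤ (Fin 3)) K'ₛ
  have hn : n = 3 := by
    have h1 : Module.finrank ℤ K'ₛ = n := by
      rw [Module.finrank_eq_card_basis B₀, Fintype.card_fin]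
    have h2 : Module.finrank ℤ K'ₛ ≤ 3 := by
      have := Submodule.finrank_le K'ₛ
      rwa [Module.finrank_eq_card_basis (Pi.basisFun ℤ (Fin 3)), Fintype.card_fin] at this
    have h3 : 3 ≤ Module.finrank ℤ K'ₛ := by
      set f : (Fin 3 → ℤ) →ₗ[ℤ] K'ₛ :=
        LinearMap.codRestrict K'ₛ ((q : ℤ) • LinearMap.id) (fun v => hqmemK' v) with hfdef
      have hfinj : Function.Injective f := by
        intro x y hxy
        have : (q : ℤ) • x = (q : ℤ) • y := by
          have := congrArg (Subtype.val) hxy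
          simpa [hfdef] using this
        exact smul_right_injective _ hq0 this
      have := LinearMap.finrank_le_finrank_of_injective hfinj
      rwa [Module.finrank_eq_card_basis (Pi.basisFun ℤ (Fin 3)), Fintype.card_fin] at this
    omega
  set B : Module.Basis (Fin 3) ℤ K'ₛ := B₀.reindex (finCongr hn) with hBdef
  set e : Fin 3 → (Fin 3 → ℤ) := fun i => ((B i : K'ₛ) : Fin 3 → ℤ) with hedef
  have he : ∀ i, e i ∈ K' := fun i => (B i).2
  -- the map T'
  set T'ₗ : (Fin 3 → ℤ) →ₗ[ℤ] (Fin 3 → ℤ) :=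
    K'ₛ.subtype ∘ₗ (B.equivFun.symm : (Fin 3 → ℤ) ≃ₗ[ℤ] _).toLinearMap with hT'def
  have hT'apply : ∀ v : Fin 3 → ℤ, T'ₗ v = v 0 • e 0 + v 1 • e 1 + v 2 • e 2 := by
    intro v
    simp [hT'def, Module.Basis.equivFun_symm_apply, Fin.sum_univ_three, hedef]
  have hT'mem : ∀ v, T'ₗ v ∈ K' := fun v => (B.equivFun.symm v).2
  have hT'surj : ∀ x ∈ K', ∃ v, T'ₗ v = x := by
    intro x hx
    refine ⟨B.equivFun ⟨x, hx⟩, ?_⟩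
    show (K'ₛ.subtype) (B.equivFun.symm (B.equivFun ⟨x, hx⟩)) = x
    rw [LinearEquiv.symm_apply_apply]
    rfl
  have hT'inj : Function.Injective T'ₗ := by
    intro x y hxy
    have : B.equivFun.symm x = B.equivFun.symm y := Subtype.ext hxy
    exact B.equivFun.symm.injective this
  -- divisibility of values on K'
  have hK'q : ∀ x ∈ K', (q : ℤ) ∣ N.eval x := by
    intro x hx
    obtain ⟨v, hv⟩ := (hmemK' x).mp hx
    have h1 : (p : ℤ) ^ 2 * N.eval x = (p : ℤ) * ((q : ℤ) * S.eval v) := by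
      rw [← eval_zsmul, ← hv, hLeval]
    have h2 : (q : ℤ) ∣ (p : ℤ) ^ 2 * N.eval x := ⟨(p : ℤ) * S.eval v, by rw [h1]; ring⟩
    rcases hqZ.dvd_mul.mp h2 with h3 | h3
    · exfalso
      have h4 : (q : ℤ) ∣ (p : ℤ) := hqZ.dvd_of_dvd_pow h3
      rw [Int.natCast_dvd_natCast] at h4
      exact hpq ((Nat.prime_dvd_prime_iff_eq hq hp).mp h4).symm
    · exact h3
  obtain ⟨a', ha'⟩ := hK'q (e 0) (he 0)
  obtain ⟨b', hb'⟩ := hK'q (e 1) (he 1)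
  obtain ⟨c', hc'⟩ := hK'q (e 2) (he 2)
  obtain ⟨t', ht'⟩ := dvd_sub (dvd_sub (hK'q (e 0 + e 1) (K'.add_mem (he 0) (he 1))) ⟨a', ha'⟩) ⟨b', hb'⟩
  obtain ⟨r', hr'⟩ := dvd_sub (dvd_sub (hK'q (e 1 + e 2) (K'.add_mem (he 1) (he 2))) ⟨b', hb'⟩) ⟨c', hc'⟩
  obtain ⟨s', hs'⟩ := dvd_sub (dvd_sub (hK'q (e 2 + e 0) (K'.add_mem (he 2) (he 0))) ⟨c', hc'⟩) ⟨a', ha'⟩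
  set M' : TernaryForm := ⟨a', b', c', r', s', t'⟩ with hM'def
  have hqM' : ∀ v, N.eval (T'ₗ v) = (q : ℤ) * M'.eval v := by
    intro v
    rw [hT'apply v, eval_lincomb, ht', hr', hs', ha', hb', hc']
    simp only [hM'def, TernaryForm.eval, Int.cast_id]
    ring
  -- positivity
  have hq0' : (0 : ℤ) < (q : ℤ) := by exact_mod_cast hq.pos
  have hM'pos : M'.PosDef := by
    intro v hv
    have hTv : T'ₗ v ≠ 0 := by
      intro h0
      exact hv (hT'inj (by rw [h0, map_zero]))
    have := hN (T'ₗ v) hTv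
    rw [hqM' v] at this
    nlinarith [this, hq0']
  -- S is primitive
  have hmemK₂ : ∀ x, x ∈ K₂ ↔ ∃ v, T₂ v = x := by
    intro x
    rw [← SetLike.mem_coe, ← hT₂r]
    exact Iff.rfl
  have hSprim : Ideal.span (S.eval '' (Set.univ : Set (Fin 3 → ℤ))) = ⊤ := by
    have himg : M.eval '' (K₂ : Set (Fin 3 → ℤ)) = (fun t => (q : ℤ) * t) '' (S.eval '' (Set.univ : Set (Fin 3 → ℤ))) := by
      ext y
      constructor
      · rintro ⟨x, hx, rfl⟩
        obtain ⟨v, rfl⟩ := (hmemK₂ x).mp hx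
        exact ⟨S.eval v, ⟨v, Set.mem_univ v, rfl⟩, (hT₂ v).symm⟩
      · rintro ⟨w, ⟨v, _, rfl⟩, rfl⟩
        exact ⟨T₂ v, (hmemK₂ (T₂ v)).mpr ⟨v, rfl⟩, hT₂ v⟩
    have h5 : Ideal.span {(q : ℤ)} * Ideal.span (S.eval '' (Set.univ : Set (Fin 3 → ℤ))) = Ideal.span {(q : ℤ)} := by
      rw [← span_mul_image]
      rw [TernaryForm.normIdeal] at hK₂n
      rw [← himg, hK₂n]
    exact ideal_cancel _ hq0 _ h5
  -- values of M' : q·N(x) and p·S(w) are values of M'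
  have hval1 : ∀ w : Fin 3 → ℤ, ∃ v, M'.eval v = (q : ℤ) * N.eval w := by
    intro w
    refine ⟨B.equivFun ⟨(q : ℤ) • w, hqmemK' w⟩, ?_⟩
    obtain ⟨v2, hv2⟩ := hT'surj ((q : ℤ) • w) (hqmemK' w)
    have hTv : T'ₗ (B.equivFun ⟨(q : ℤ) • w, hqmemK' w⟩) = (q : ℤ) • w := by
      show (K'ₛ.subtype) (B.equivFun.symm (B.equivFun ⟨(q : ℤ) • w, hqmemK' w⟩)) = _
      rw [LinearEquiv.symm_apply_apply]
      rfl
    have h6 := hqM' (B.equivFun ⟨(q : ℤ) • w, hqmemK' w⟩)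
    rw [hTv, eval_zsmul] at h6
    refine mul_left_cancel₀ hq0 ?_
    rw [← h6]; ring
  have hval2 : ∀ w : Fin 3 → ℤ, ∃ v, M'.eval v = (p : ℤ) * S.eval w := by
    intro w
    have hLw : L w ∈ K' := hJK' ⟨w, rfl⟩
    refine ⟨B.equivFun ⟨L w, hLw⟩, ?_⟩
    have hTv : T'ₗ (B.equivFun ⟨L w, hLw⟩) = L w := by
      show (K'ₛ.subtype) (B.equivFun.symm (B.equivFun ⟨L w, hLw⟩)) = _
      rw [LinearEquiv.symm_apply_apply]
      rfl
    have h6 := hqM' (B.equivFun ⟨L w, hLw⟩)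
    rw [hTv, hLeval] at h6
    refine mul_left_cancel₀ hq0 ?_
    rw [← h6]; ring
  -- M' is primitive
  have hM'prim : Ideal.span (M'.eval '' (Set.univ : Set (Fin 3 → ℤ))) = ⊤ := by
    have hqmem : (q : ℤ) ∈ Ideal.span (M'.eval '' (Set.univ : Set (Fin 3 → ℤ))) := by
      have h1 : (1 : ℤ) ∈ Ideal.span (N.eval '' (Set.univ : Set (Fin 3 → ℤ))) := by
        have h0 : Ideal.span (N.eval '' (Set.univ : Set (Fin 3 → ℤ))) = ⊤ := hNprim
        rw [h0]; trivial
      have key : ∀ x ∈ Ideal.span (N.eval '' (Set.univ : Set (Fin 3 → ℤ))),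
          (q : ℤ) * x ∈ Ideal.span (M'.eval '' (Set.univ : Set (Fin 3 → ℤ))) := by
        intro x hx
        refine Submodule.span_induction ?_ ?_ ?_ ?_ hx
        · rintro y ⟨w, _, rfl⟩
          obtain ⟨v, hv⟩ := hval1 w
          exact hv ▸ Ideal.subset_span ⟨v, Set.mem_univ v, rfl⟩
        · simp
        · intro y z _ _ hy hz
          rw [mul_add]; exact Ideal.add_mem _ hy hz
        · intro c y _ hy
          rw [smul_eq_mul, mul_left_comm]
          exact Ideal.mul_mem_left _ c hy
      simpa using key 1 h1
    have hpmem : (p : ℤ) ∈ Ideal.span (M'.eval '' (Set.univ : Set (Fin 3 → ℤ))) := by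
      have h1 : (1 : ℤ) ∈ Ideal.span (S.eval '' (Set.univ : Set (Fin 3 → ℤ))) := by rw [hSprim]; trivial
      have key : ∀ x ∈ Ideal.span (S.eval '' (Set.univ : Set (Fin 3 → ℤ))),
          (p : ℤ) * x ∈ Ideal.span (M'.eval '' (Set.univ : Set (Fin 3 → ℤ))) := by
        intro x hx
        refine Submodule.span_induction ?_ ?_ ?_ ?_ hx
        · rintro y ⟨w, _, rfl⟩
          obtain ⟨v, hv⟩ := hval2 w
          exact hv ▸ Ideal.subset_span ⟨v, Set.mem_univ v, rfl⟩
        · simp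
        · intro y z _ _ hy hz
          rw [mul_add]; exact Ideal.add_mem _ hy hz
        · intro c y _ hy
          rw [smul_eq_mul, mul_left_comm]
          exact Ideal.mul_mem_left _ c hy
      simpa using key 1 h1
    obtain ⟨u, v, huv⟩ := (Nat.isCoprime_iff_coprime.mpr ((Nat.coprime_primes hp hq).mpr hpq))
    rw [Ideal.eq_top_iff_one, ← huv]
    exact Ideal.add_mem _ (Ideal.mul_mem_left _ u hpmem) (Ideal.mul_mem_left _ v hqmem)
  -- the second descendant data
  refine ⟨M', hM'pos, ?_, ?_⟩
  · -- GammaDescendant q M' N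
    refine ⟨K', hK'i, ?_, T'ₗ.toAddMonoidHom, hT'inj, ?_, hqM'⟩
    · have himg : N.eval '' (K' : Set (Fin 3 → ℤ)) =
          (fun t => (q : ℤ) * t) '' (M'.eval '' (Set.univ : Set (Fin 3 → ℤ))) := by
        ext y
        constructor
        · rintro ⟨x, hx, rfl⟩
          obtain ⟨v, rfl⟩ := hT'surj x hx
          exact ⟨M'.eval v, ⟨v, Set.mem_univ v, rfl⟩, (hqM' v).symm⟩
        · rintro ⟨w, ⟨v, _, rfl⟩, rfl⟩
          exact ⟨T'ₗ v, hT'mem v, hqM' v⟩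
      rw [TernaryForm.normIdeal, himg, span_mul_image, hM'prim, Ideal.mul_top]
    · ext x
      constructor
      · rintro ⟨v, rfl⟩
        exact hT'mem v
      · intro hx
        obtain ⟨v, hv⟩ := hT'surj x hx
        exact ⟨v, hv⟩
  · -- GammaDescendant p S M'
    set K'' : AddSubgroup (Fin 3 → ℤ) := J.comap T'ₗ.toAddMonoidHom with hK''def
    have hmemK'' : ∀ x, x ∈ K'' ↔ T'ₗ x ∈ J := fun x => Iff.rfl
    have hT'rangeAdd : (T'ₗ.toAddMonoidHom).range = K' := by
      refine SetLike.ext' ?_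
      ext x
      constructor
      · rintro ⟨v, rfl⟩
        exact hT'mem v
      · intro hx
        obtain ⟨v, hv⟩ := hT'surj x hx
        exact ⟨v, hv⟩
    have hK''i : K''.index = p := by
      rw [hK''def, AddSubgroup.index_comap, hT'rangeAdd]
      have h7 := AddSubgroup.relIndex_mul_index hJK'
      rw [hJi, hK'i] at h7
      exact Nat.eq_of_mul_eq_mul_right hq.pos (by rw [h7]; ring)
    set T''ₗ : (Fin 3 → ℤ) →ₗ[ℤ] (Fin 3 → ℤ) :=
      B.equivFun.toLinearMap ∘ₗ (L.toIntLinearMap.codRestrict K'ₛ (fun v => hJK' ⟨v, rfl⟩)) with hT''def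
    have hcomp : ∀ v, T'ₗ (T''ₗ v) = L v := by
      intro v
      show (K'ₛ.subtype) (B.equivFun.symm (B.equivFun _)) = L v
      rw [LinearEquiv.symm_apply_apply]
      rfl
    have hT''eval : ∀ v, M'.eval (T''ₗ v) = (p : ℤ) * S.eval v := by
      intro v
      refine mul_left_cancel₀ hq0 ?_
      rw [← hqM', hcomp, hLeval]
      ring
    have hT''inj : Function.Injective T''ₗ := by
      intro x y hxy
      apply hLinj
      rw [← hcomp, ← hcomp, hxy]
    have hT''surj : ∀ x ∈ K'', ∃ v, T''ₗ v = x := by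
      intro x hx
      obtain ⟨v, hv⟩ := (hmemK'' x).mp hx
      exact ⟨v, hT'inj (by rw [hcomp, hv])⟩
    refine ⟨K'', hK''i, ?_, T''ₗ.toAddMonoidHom, hT''inj, ?_, hT''eval⟩
    · have himg : M'.eval '' (K'' : Set (Fin 3 → ℤ)) =
          (fun t => (p : ℤ) * t) '' (S.eval '' (Set.univ : Set (Fin 3 → ℤ))) := by
        ext y
        constructor
        · rintro ⟨x, hx, rfl⟩
          obtain ⟨v, rfl⟩ := hT''surj x hx
          exact ⟨S.eval v, ⟨v, Set.mem_univ v, rfl⟩, (hT''eval v).symm⟩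
        · rintro ⟨w, ⟨v, _, rfl⟩, rfl⟩
          exact ⟨T''ₗ v, (hmemK'' (T''ₗ v)).mpr (by rw [hcomp]; exact ⟨v, rfl⟩), hT''eval v⟩
      rw [TernaryForm.normIdeal, himg, span_mul_image, hSprim, Ideal.mul_top]
    · ext x
      constructor
      · rintro ⟨v, rfl⟩
        exact (hmemK'' (T''ₗ v)).mpr (by rw [hcomp]; exact ⟨v, rfl⟩)
      · intro hx
        obtain ⟨v, hv⟩ := hT''surj x hx
        exact ⟨v, hv⟩
end

section
/- Let p be a prime, m ≥ 0 an integer, and N a primitive positive definite ternary form which is p-hyperbolic with exponent m+1. Then there exist a ℤ-basis x₁, x₂, x₃ of ℤ³ and an integer d not divisible by p such that Q_N(a x₁ + b x₂ + c x₃) ≡ ab + d·p^{m+1}·c² (mod p^{m+2}) for all integers a, b, c. -/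
section Helpers

variable {R : Type*} [CommRing R]

/-- congruent entries give congruent determinants -/
lemma dvd_det_sub (n : R) (A B : Matrix (Fin 3) (Fin 3) R)
    (h : ∀ i j, n ∣ A i j - B i j) : n ∣ A.det - B.det := by
  classical
  set I := Ideal.span ({n} : Set R)
  have key : (Ideal.Quotient.mk I).mapMatrix A = (Ideal.Quotient.mk I).mapMatrix B := by
    ext i j
    simp only [RingHom.mapMatrix_apply, Matrix.map_apply]
    rw [Ideal.Quotient.eq]
    exact Ideal.mem_span_singleton.mpr (h i j)
  have : (Ideal.Quotient.mk I) A.det = (Ideal.Quotient.mk I) B.det := by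
    rw [RingHom.map_det, RingHom.map_det, key]
  exact Ideal.mem_span_singleton.mp (Ideal.Quotient.eq.mp this)

lemma dvd_mul_right_entries (n : R) (A B C : Matrix (Fin 3) (Fin 3) R)
    (h : ∀ i j, n ∣ A i j - B i j) : ∀ i j, n ∣ (A * C) i j - (B * C) i j := by
  intro i j
  rw [Matrix.mul_apply, Matrix.mul_apply, ← Finset.sum_sub_distrib]
  refine Finset.dvd_sum fun k _ => ?_
  rw [← sub_mul]
  exact Dvd.dvd.mul_right (h i k) _

lemma eval_map {S : Type*} [CommRing S] (f : R →+* S) (Q : TernaryForm) (v : Fin 3 → R) :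
    f (Q.eval v) = Q.eval (fun i => f (v i)) := by
  simp [TernaryForm.eval, map_add, map_mul, map_pow, map_intCast]

lemma dvd_eval_sub (n : R) (Q : TernaryForm) (v w : Fin 3 → R)
    (h : ∀ i, n ∣ v i - w i) : n ∣ Q.eval v - Q.eval w := by
  classical
  set I := Ideal.span ({n} : Set R)
  have key : (fun i => (Ideal.Quotient.mk I) (v i)) = (fun i => (Ideal.Quotient.mk I) (w i)) := by
    funext i
    rw [Ideal.Quotient.eq]
    exact Ideal.mem_span_singleton.mpr (h i)
  have : (Ideal.Quotient.mk I) (Q.eval v) = (Ideal.Quotient.mk I) (Q.eval w) := by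
    rw [eval_map, eval_map, key]
  exact Ideal.mem_span_singleton.mp (Ideal.Quotient.eq.mp this)

end Helpers

/-- L1: coprime lifting along an arithmetic progression. -/
lemma exists_coprime_shift (n a b : ℤ) (ha : a ≠ 0)
    (h : ∃ x y z : ℤ, x * a + y * b + z * n = 1) :
    ∃ t : ℤ, IsCoprime a (b + n * t) := by
  obtain ⟨x, y, z, hxyz⟩ := h
  set m : ℕ := a.natAbs with hm
  have hm0 : m ≠ 0 := Int.natAbs_ne_zero.mpr ha
  haveI : NeZero m := ⟨hm0⟩
  set d : ℕ := Nat.gcd n.natAbs m with hd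
  have hdm : d ∣ m := Nat.gcd_dvd_right _ _
  have hda : (d : ℤ) ∣ a := (Int.natCast_dvd_natCast.mpr hdm).trans (Int.natAbs_dvd.mpr dvd_rfl)
  have hdn : (d : ℤ) ∣ n := (Int.natCast_dvd_natCast.mpr (Nat.gcd_dvd_left _ _)).trans
    (Int.natAbs_dvd.mpr dvd_rfl)
  -- b is a unit mod d
  have hbunit : IsUnit ((b : ZMod d)) := by
    have h1 : ((x * a + y * b + z * n : ℤ) : ZMod d) = 1 := by rw [hxyz]; simp
    have h2 : ((a : ℤ) : ZMod d) = 0 := (ZMod.intCast_zmod_eq_zero_iff_dvd _ _).mpr hda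
    have h3 : ((n : ℤ) : ZMod d) = 0 := (ZMod.intCast_zmod_eq_zero_iff_dvd _ _).mpr hdn
    push_cast at h1
    rw [h2, h3] at h1
    simp only [mul_zero, zero_add, add_zero] at h1
    exact IsUnit.of_mul_eq_one _ (by rw [mul_comm] at h1; exact h1)
  -- lift to unit mod m
  obtain ⟨u, hu⟩ := ZMod.unitsMap_surjective hdm hbunit.unit
  set U : ℕ := (u : ZMod m).val with hU
  have hUm : Nat.Coprime U m := ZMod.val_coe_unit_coprime u
  have hcast : ((U : ℤ) : ZMod d) = ((b : ℤ) : ZMod d) := by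
    have : ZMod.castHom hdm (ZMod d) (u : ZMod m) = (b : ZMod d) := by
      have := congrArg (Units.val) hu
      simpa [ZMod.unitsMap_def] using this
    rw [← this]
    push_cast
    rw [ZMod.natCast_val, ZMod.castHom_apply]
  have hdvd : (d : ℤ) ∣ (U : ℤ) - b := by
    rw [ZMod.intCast_eq_intCast_iff] at hcast
    exact hcast.symm.dvd
  obtain ⟨k, hk⟩ := hdvd
  -- Bezout for d
  have hbez : (d : ℤ) = (n.natAbs : ℤ) * (Nat.gcdA n.natAbs m) + (m : ℤ) * (Nat.gcdB n.natAbs m) :=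
    Nat.gcd_eq_gcd_ab n.natAbs m
  obtain ⟨ε, hε, hεn⟩ : ∃ ε : ℤ, (ε = 1 ∨ ε = -1) ∧ (n.natAbs : ℤ) = n * ε := by
    rcases Int.natAbs_eq n with h | h
    · exact ⟨1, Or.inl rfl, by rw [mul_one]; exact h.symm⟩
    · exact ⟨-1, Or.inr rfl, by rw [mul_neg_one]; omega⟩
  set X : ℤ := ε * (Nat.gcdA n.natAbs m) with hX
  set Y : ℤ := Nat.gcdB n.natAbs m with hY
  have hbez2 : (d : ℤ) = n * X + (m : ℤ) * Y := by rw [hbez, hεn, hX, hY]; ring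
  refine ⟨X * k, ?_⟩
  have heq : b + n * (X * k) = (U : ℤ) - (m : ℤ) * (Y * k) := by
    have : (U : ℤ) - b = (n * X + (m : ℤ) * Y) * k := by rw [← hbez2]; exact hk
    linarith [this]
  rw [heq]
  have hcop : IsCoprime ((m : ℤ)) ((U : ℤ)) := (Nat.isCoprime_iff_coprime.mpr hUm).symm
  have hcop2 : IsCoprime ((m : ℤ)) ((U : ℤ) - (m : ℤ) * (Y * k)) := by
    have := IsCoprime.add_mul_left_right hcop (-(Y * k))
    simpa [mul_neg, ← sub_eq_add_neg] using this
  rcases Int.natAbs_eq a with h | h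
  · rw [h, ← hm]; exact hcop2
  · rw [h, ← hm]; exact hcop2.neg_left

/-- ML2: lifting a 2×2 matrix with det ≡ 1 (mod n) to an exact SL₂(ℤ) matrix. -/
lemma sl2_lift (n : ℤ) (hn : n ≠ 0) (a b c d : ℤ) (h : n ∣ a * d - b * c - 1) :
    ∃ a' b' c' d' : ℤ, a' * d' - b' * c' = 1 ∧
      n ∣ a' - a ∧ n ∣ b' - b ∧ n ∣ c' - c ∧ n ∣ d' - d := by
  obtain ⟨w, hw⟩ := h
  -- bump a to be nonzero
  set s : ℤ := if a = 0 then 1 else 0 with hs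
  set a₀ : ℤ := a + n * s with ha₀
  have ha0 : a₀ ≠ 0 := by
    rcases eq_or_ne a 0 with h0 | h0
    · simp [ha₀, hs, h0, hn]
    · simpa [ha₀, hs, h0] using h0
  -- Bezout-style combination for (a₀, b, n)
  have hcomb : ∃ x y z : ℤ, x * a₀ + y * b + z * n = 1 := by
    refine ⟨d, -c, -w - d * s, ?_⟩
    rw [ha₀]; linear_combination hw
  obtain ⟨t, hcop⟩ := exists_coprime_shift n a₀ b ha0 hcomb
  set b' : ℤ := b + n * t with hb'
  obtain ⟨X, Y, hXY⟩ := hcop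
  -- hXY : X * a₀ + Y * b' = 1
  set γ : ℤ := c * X + d * Y with hγ
  set δ : ℤ := d * a₀ - c * b' with hδ
  have hδ1 : n ∣ δ - 1 := by
    refine ⟨w + d * s - c * t, ?_⟩
    rw [hδ, ha₀, hb']; linear_combination hw
  refine ⟨a₀, b', γ * a₀ - Y, γ * b' + X, by linear_combination hXY, ⟨s, by ring⟩,
    ⟨t, by ring⟩, ?_, ?_⟩
  · obtain ⟨k, hk⟩ := hδ1
    refine ⟨Y * k, ?_⟩
    rw [hγ]; linear_combination Y * hk + c * hXY
  · obtain ⟨k, hk⟩ := hδ1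
    refine ⟨-X * k, ?_⟩
    rw [hγ]; linear_combination (-X) * hk + d * hXY

/-- ML3: lifting a 3×3 integer matrix with det ≡ 1 (mod n) to an exact SL₃(ℤ) matrix. -/
lemma sl3_lift (n : ℤ) (hn : n ≠ 0) (A : Matrix (Fin 3) (Fin 3) ℤ) (h : n ∣ A.det - 1) :
    ∃ X : Matrix (Fin 3) (Fin 3) ℤ, X.det = 1 ∧ ∀ i j, n ∣ X i j - A i j := by
  obtain ⟨w, hw⟩ := h
  set C0 : ℤ := A 1 1 * A 2 2 - A 1 2 * A 2 1 with hC0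
  set C1 : ℤ := -(A 1 0 * A 2 2 - A 1 2 * A 2 0) with hC1
  set C2 : ℤ := A 1 0 * A 2 1 - A 1 1 * A 2 0 with hC2
  have hdet : A.det = A 0 0 * C0 + A 0 1 * C1 + A 0 2 * C2 := by
    rw [Matrix.det_fin_three]; ring
  -- bump the (0,0) entry to be nonzero
  set s : ℤ := if A 0 0 = 0 then 1 else 0 with hs
  set a' : ℤ := A 0 0 + n * s with ha'
  have ha0 : a' ≠ 0 := by
    rcases eq_or_ne (A 0 0) 0 with h0 | h0
    · simp [ha', hs, h0, hn]
    · simpa [ha', hs, h0] using h0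
  set g : ℕ := Int.gcd a' (A 0 1) with hg
  have hgne : (g : ℤ) ≠ 0 := by
    simp only [hg, ne_eq, Int.natCast_eq_zero]
    intro hc
    exact ha0 (Int.gcd_eq_zero_iff.mp hc).1
  obtain ⟨a₁, ha1⟩ : ((g : ℤ)) ∣ a' := Int.gcd_dvd_left _ _
  obtain ⟨b₁, hb1⟩ : ((g : ℤ)) ∣ A 0 1 := Int.gcd_dvd_right _ _
  have hPQ : (g : ℤ) = a' * Int.gcdA a' (A 0 1) + A 0 1 * Int.gcdB a' (A 0 1) :=
    Int.gcd_eq_gcd_ab a' (A 0 1)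
  set P : ℤ := Int.gcdA a' (A 0 1) with hP
  set Q : ℤ := Int.gcdB a' (A 0 1) with hQ
  have h1 : P * a₁ + Q * b₁ = 1 := by
    have h2 : (g : ℤ) * (P * a₁ + Q * b₁) = (g : ℤ) * 1 := by
      rw [mul_one]
      linear_combination (-1 : ℤ) * hPQ + (-P) * ha1 + (-Q) * hb1
    exact mul_left_cancel₀ hgne h2
  have hcomb : ∃ x y z : ℤ, x * (g : ℤ) + y * A 0 2 + z * n = 1 := by
    refine ⟨a₁ * C0 + b₁ * C1, C2, -s * C0 - w, ?_⟩
    linear_combination (-C0) * ha1 + (-C1) * hb1 - hdet + hw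
  obtain ⟨t, hcop⟩ := exists_coprime_shift n ((g : ℤ)) (A 0 2) hgne hcomb
  set c' : ℤ := A 0 2 + n * t with hc'
  obtain ⟨U, V, hUV⟩ := hcop
  -- completion of the primitive row (a', A 0 1, c') to an SL₃ matrix
  set S : Matrix (Fin 3) (Fin 3) ℤ :=
    !![a', A 0 1, c'; -Q, P, 0; -V * a₁, -V * b₁, U] with hS
  have hdetS : S.det = 1 := by
    rw [Matrix.det_fin_three]
    simp only [hS]
    simp
    linear_combination (-U) * hPQ + c' * V * h1 + hUV
  set A' : Matrix (Fin 3) (Fin 3) ℤ := A.updateRow 0 ![a', A 0 1, c'] with hA'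
  have hrow : ∀ k, A' 0 k = S 0 k := by
    intro k
    fin_cases k <;> simp [hA', hS]
  have hA'A : ∀ i j, n ∣ A' i j - A i j := by
    intro i j
    rcases eq_or_ne i 0 with hi | hi
    · subst hi
      rw [hA', Matrix.updateRow_self]
      have hj : j = 0 ∨ j = 1 ∨ j = 2 := by omega
      rcases hj with hj | hj | hj <;> subst hj
      · exact ⟨s, by show a' - A 0 0 = n * s; rw [ha']; ring⟩
      · exact ⟨0, by show A 0 1 - A 0 1 = n * 0; ring⟩
      · exact ⟨t, by show c' - A 0 2 = n * t; rw [hc']; ring⟩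
    · simp [hA', Matrix.updateRow_ne hi]
  set T : Matrix (Fin 3) (Fin 3) ℤ := A' * S.adjugate with hT
  have hTS : T * S = A' := by
    rw [hT, Matrix.mul_assoc, Matrix.adjugate_mul, hdetS, one_smul, Matrix.mul_one]
  have hT0 : ∀ j, T 0 j = (1 : Matrix (Fin 3) (Fin 3) ℤ) 0 j := by
    intro j
    have : T 0 j = (S * S.adjugate) 0 j := by
      rw [hT, Matrix.mul_apply, Matrix.mul_apply]
      exact Finset.sum_congr rfl fun k _ => by rw [hrow k]
    rw [this, Matrix.mul_adjugate, hdetS, one_smul]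
  have hT00 : T 0 0 = 1 := by rw [hT0 0]; simp
  have hT01 : T 0 1 = 0 := by rw [hT0 1]; simp [Matrix.one_apply]
  have hT02 : T 0 2 = 0 := by rw [hT0 2]; simp [Matrix.one_apply]
  have hdetT : n ∣ T.det - 1 := by
    have e1 : T.det = A'.det := by
      rw [hT, Matrix.det_mul, Matrix.det_adjugate, hdetS]
      simp
    have e2 : n ∣ A'.det - A.det := dvd_det_sub n A' A hA'A
    rw [e1]
    have : A'.det - 1 = (A'.det - A.det) + (A.det - 1) := by ring
    rw [this]
    exact dvd_add e2 ⟨w, hw⟩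
  have hblock : n ∣ T 1 1 * T 2 2 - T 1 2 * T 2 1 - 1 := by
    have : T 1 1 * T 2 2 - T 1 2 * T 2 1 = T.det := by
      rw [Matrix.det_fin_three, hT00, hT01, hT02]; ring
    rw [this]; exact hdetT
  obtain ⟨a₂, b₂, c₂, d₂, hdet2, hc1, hc2, hc3, hc4⟩ :=
    sl2_lift n hn (T 1 1) (T 1 2) (T 2 1) (T 2 2) hblock
  set XT : Matrix (Fin 3) (Fin 3) ℤ := !![1, 0, 0; T 1 0, a₂, b₂; T 2 0, c₂, d₂] with hXT
  have hdetXT : XT.det = 1 := by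
    rw [Matrix.det_fin_three]
    simp only [hXT]
    simp
    linear_combination hdet2
  have hXTT : ∀ i j, n ∣ XT i j - T i j := by
    intro i j
    fin_cases i <;> fin_cases j <;>
      simp [hXT, hT00, hT01, hT02] <;>
      first
        | exact hc1 | exact hc2 | exact hc3 | exact hc4
        | (rw [show (1 : ℤ) - 1 = 0 by ring]; exact dvd_zero n)
  refine ⟨XT * S, by rw [Matrix.det_mul, hdetXT, hdetS]; ring, ?_⟩
  intro i j
  have h5 := dvd_mul_right_entries n XT T S hXTT i j
  rw [hTS] at h5
  have h6 := hA'A i j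
  have : XT * S = XT * S := rfl
  calc n ∣ ((XT * S) i j - A' i j) + (A' i j - A i j) := dvd_add h5 h6
    _ = (XT * S) i j - A i j := by ring

theorem stmt_7_aux (p : ℕ) [Fact p.Prime] (m : ℕ) (N : TernaryForm)
    (hhyp : ∃ δ : ℤ_[p], IsUnit δ ∧ ∃ B : Module.Basis (Fin 3) ℤ_[p] (Fin 3 → ℤ_[p]),
      ∀ a b c : ℤ_[p],
        N.eval (a • B 0 + b • B 1 + c • B 2) = a * b + δ * (p : ℤ_[p]) ^ (m + 1) * c ^ 2) :
    ∃ (x : Module.Basis (Fin 3) ℤ (Fin 3 → ℤ)) (d : ℤ), ¬ (p : ℤ) ∣ d ∧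
      ∀ a b c : ℤ, ((p : ℤ) ^ (m + 2)) ∣
        (N.eval (a • x 0 + b • x 1 + c • x 2) - (a * b + d * (p : ℤ) ^ (m + 1) * c ^ 2)) := by
  classical
  obtain ⟨δ, hδ, B, hB⟩ := hhyp
  have hp : p.Prime := Fact.out
  have hpZ : ((p : ℤ)) ^ (m + 2) ≠ 0 := pow_ne_zero _ (by exact_mod_cast hp.ne_zero)
  set e : Module.Basis (Fin 3) ℤ_[p] (Fin 3 → ℤ_[p]) := Pi.basisFun ℤ_[p] (Fin 3) with he
  set U : Matrix (Fin 3) (Fin 3) ℤ_[p] := e.toMatrix ⇑B with hUdef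
  have hUB : ∀ i j, U i j = B j i := by
    intro i j
    simp [hUdef, he, Module.Basis.toMatrix_apply]
  have hunit : IsUnit U.det := by
    have h2 := Module.Basis.toMatrix_mul_toMatrix_flip e B
    exact IsUnit.of_mul_eq_one _ (by rw [← Matrix.det_mul, h2, Matrix.det_one])
  set w : ℤ_[p]ˣ := hunit.unit with hwdef
  have hwU : (w : ℤ_[p]) = U.det := hunit.unit_spec
  set V : Matrix (Fin 3) (Fin 3) ℤ_[p] :=
    U.updateCol 2 (fun i => ((w⁻¹ : ℤ_[p]ˣ) : ℤ_[p]) * U i 2) with hVdef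
  have hdetV : V.det = 1 := by
    have h3 : (fun i => ((w⁻¹ : ℤ_[p]ˣ) : ℤ_[p]) * U i 2)
        = ((w⁻¹ : ℤ_[p]ˣ) : ℤ_[p]) • (fun i => U i 2) := by
      funext i; simp [smul_eq_mul]
    rw [hVdef, h3, Matrix.det_updateCol_smul, Matrix.updateCol_eq_self, ← hwU]
    exact Units.inv_mul w
  have hV0 : ∀ j, V j 0 = B 0 j := by
    intro j
    rw [hVdef, Matrix.updateCol_apply]
    simp [hUB]
  have hV1 : ∀ j, V j 1 = B 1 j := by
    intro j
    rw [hVdef, Matrix.updateCol_apply]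
    simp [hUB]
  have hV2 : ∀ j, V j 2 = ((w⁻¹ : ℤ_[p]ˣ) : ℤ_[p]) * B 2 j := by
    intro j
    rw [hVdef, Matrix.updateCol_apply]
    simp [hUB]
  -- integer approximation matrix
  set A : Matrix (Fin 3) (Fin 3) ℤ := fun i j => ((PadicInt.appr (V i j) (m + 2) : ℕ) : ℤ)
    with hAdef
  have happrox : ∀ i j, ((p : ℤ_[p])) ^ (m + 2) ∣ V i j - ((A i j : ℤ) : ℤ_[p]) := by
    intro i j
    have h4 := PadicInt.appr_spec (m + 2) (V i j)
    rw [Ideal.mem_span_singleton] at h4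
    simpa [hAdef] using h4
  have hdetA : ((p : ℤ)) ^ (m + 2) ∣ A.det - 1 := by
    rw [← PadicInt.pow_p_dvd_int_iff]
    push_cast
    have hAd : ((A.det : ℤ) : ℤ_[p]) = (A.map (fun z => (z : ℤ_[p]))).det := by
      have h5 := RingHom.map_det (Int.castRingHom ℤ_[p]) A
      simpa [RingHom.mapMatrix_apply] using h5
    have h6 : ((p : ℤ_[p])) ^ (m + 2) ∣ (A.map (fun z => (z : ℤ_[p]))).det - V.det := by
      refine dvd_det_sub _ _ _ (fun i j => ?_)
      have h7 := dvd_neg.mpr (happrox i j)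
      rw [neg_sub] at h7
      simpa [Matrix.map_apply] using h7
    rw [show (1 : ℤ_[p]) = V.det from hdetV.symm]
    exact h6
  obtain ⟨X, hdetX, hXA⟩ := sl3_lift (((p : ℤ)) ^ (m + 2)) hpZ A hdetA
  have hXV : ∀ i j, ((p : ℤ_[p])) ^ (m + 2) ∣ ((X i j : ℤ) : ℤ_[p]) - V i j := by
    intro i j
    have h8 : ((p : ℤ_[p])) ^ (m + 2) ∣ ((X i j - A i j : ℤ) : ℤ_[p]) := by
      rw [show ((p : ℤ_[p])) ^ (m + 2) = ((p : ℤ_[p])) ^ (m + 2) from rfl]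
      rw [PadicInt.pow_p_dvd_int_iff]
      exact hXA i j
    have h9 := dvd_neg.mpr (happrox i j)
    rw [neg_sub] at h9
    have h10 := dvd_add h8 h9
    have : ((X i j - A i j : ℤ) : ℤ_[p]) + (((A i j : ℤ) : ℤ_[p]) - V i j)
        = ((X i j : ℤ) : ℤ_[p]) - V i j := by push_cast; ring
    rwa [this] at h10
  -- basis from the columns of X
  have hadj : X.adjugate * X = 1 := by rw [Matrix.adjugate_mul, hdetX, one_smul]
  have hadj' : X * X.adjugate = 1 := by rw [Matrix.mul_adjugate, hdetX, one_smul]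
  set f : (Fin 3 → ℤ) ≃ₗ[ℤ] (Fin 3 → ℤ) :=
    { toFun := X.mulVec
      map_add' := fun u v => Matrix.mulVec_add X u v
      map_smul' := fun s v => Matrix.mulVec_smul X s v
      invFun := X.adjugate.mulVec
      left_inv := fun v => by
        show X.adjugate.mulVec (X.mulVec v) = v
        rw [Matrix.mulVec_mulVec, hadj, Matrix.one_mulVec]
      right_inv := fun v => by
        show X.mulVec (X.adjugate.mulVec v) = v
        rw [Matrix.mulVec_mulVec, hadj', Matrix.one_mulVec] } with hfdef
  set x : Module.Basis (Fin 3) ℤ (Fin 3 → ℤ) := (Pi.basisFun ℤ (Fin 3)).map f with hxdef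
  have hx : ∀ i j, x i j = X j i := by
    intro i j
    rw [hxdef, Module.Basis.map_apply, Pi.basisFun_apply]
    show (X.mulVec (Pi.single i 1)) j = X j i
    rw [Matrix.mulVec_single]
    exact mul_one _
  -- the scalar d
  set δ' : ℤ_[p] := δ * ((w⁻¹ : ℤ_[p]ˣ) : ℤ_[p]) * ((w⁻¹ : ℤ_[p]ˣ) : ℤ_[p]) with hδ'def
  set d : ℤ := ((PadicInt.appr δ' 1 : ℕ) : ℤ) with hddef
  have hδ'd : (p : ℤ_[p]) ∣ δ' - ((d : ℤ) : ℤ_[p]) := by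
    have h11 := PadicInt.appr_spec 1 δ'
    rw [Ideal.mem_span_singleton, pow_one] at h11
    simpa [hddef] using h11
  have hδ'unit : IsUnit δ' := (hδ.mul (Units.isUnit w⁻¹)).mul (Units.isUnit w⁻¹)
  have hpd : ¬ (p : ℤ) ∣ d := by
    rintro ⟨q, hq⟩
    have h12 : (p : ℤ_[p]) ∣ ((d : ℤ) : ℤ_[p]) := ⟨(q : ℤ_[p]), by rw [hq]; push_cast; ring⟩
    have h13 : (p : ℤ_[p]) ∣ δ' := by
      have := dvd_add hδ'd h12
      simpa using this
    have h14 := (PadicInt.norm_lt_one_iff_dvd δ').mpr h13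
    rw [PadicInt.isUnit_iff.mp hδ'unit] at h14
    exact lt_irrefl _ h14
  refine ⟨x, d, hpd, ?_⟩
  intro a b c
  rw [← PadicInt.pow_p_dvd_int_iff]
  set v : Fin 3 → ℤ := a • x 0 + b • x 1 + c • x 2 with hvdef
  have hvj : ∀ j, v j = a * X j 0 + b * X j 1 + c * X j 2 := by
    intro j
    simp [hvdef, Pi.add_apply, Pi.smul_apply, smul_eq_mul, hx]
  set vp : Fin 3 → ℤ_[p] := fun i => ((v i : ℤ) : ℤ_[p]) with hvpdef
  set wp : Fin 3 → ℤ_[p] :=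
    (a : ℤ_[p]) • B 0 + (b : ℤ_[p]) • B 1 + ((c : ℤ_[p]) * ((w⁻¹ : ℤ_[p]ˣ) : ℤ_[p])) • B 2
    with hwpdef
  have hwpj : ∀ j, wp j = (a : ℤ_[p]) * V j 0 + (b : ℤ_[p]) * V j 1 + (c : ℤ_[p]) * V j 2 := by
    intro j
    rw [hwpdef]
    simp only [Pi.add_apply, Pi.smul_apply, smul_eq_mul, hV0, hV1, hV2]
    ring
  have hvw : ∀ j, ((p : ℤ_[p])) ^ (m + 2) ∣ vp j - wp j := by
    intro j
    have hvpj : vp j = (a : ℤ_[p]) * ((X j 0 : ℤ) : ℤ_[p]) + (b : ℤ_[p]) * ((X j 1 : ℤ) : ℤ_[p])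
        + (c : ℤ_[p]) * ((X j 2 : ℤ) : ℤ_[p]) := by
      show ((v j : ℤ) : ℤ_[p]) = _
      rw [hvj j]; push_cast; ring
    have hsplit : vp j - wp j
        = (a : ℤ_[p]) * (((X j 0 : ℤ) : ℤ_[p]) - V j 0)
          + (b : ℤ_[p]) * (((X j 1 : ℤ) : ℤ_[p]) - V j 1)
          + (c : ℤ_[p]) * (((X j 2 : ℤ) : ℤ_[p]) - V j 2) := by
      rw [hvpj, hwpj j]; ring
    rw [hsplit]
    exact dvd_add (dvd_add ((hXV j 0).mul_left _) ((hXV j 1).mul_left _)) ((hXV j 2).mul_left _)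
  have heval : N.eval wp = (a : ℤ_[p]) * (b : ℤ_[p])
      + δ * (p : ℤ_[p]) ^ (m + 1) * ((c : ℤ_[p]) * ((w⁻¹ : ℤ_[p]ˣ) : ℤ_[p])) ^ 2 :=
    hB (a : ℤ_[p]) (b : ℤ_[p]) ((c : ℤ_[p]) * ((w⁻¹ : ℤ_[p]ˣ) : ℤ_[p]))
  have hcast : ((N.eval v : ℤ) : ℤ_[p]) = N.eval vp := by
    have h15 := eval_map (Int.castRingHom ℤ_[p]) N v
    simpa [hvpdef] using h15
  have hgoal : ((N.eval v - (a * b + d * (p : ℤ) ^ (m + 1) * c ^ 2) : ℤ) : ℤ_[p])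
      = (N.eval vp - N.eval wp)
        + (N.eval wp - ((a : ℤ_[p]) * (b : ℤ_[p])
            + ((d : ℤ) : ℤ_[p]) * (p : ℤ_[p]) ^ (m + 1) * (c : ℤ_[p]) ^ 2)) := by
    push_cast
    rw [hcast]
    ring
  rw [hgoal]
  refine dvd_add (dvd_eval_sub _ N vp wp hvw) ?_
  obtain ⟨k, hk⟩ := hδ'd
  refine ⟨(c : ℤ_[p]) ^ 2 * k, ?_⟩
  rw [heval]
  have hδ'eq : δ * ((w⁻¹ : ℤ_[p]ˣ) : ℤ_[p]) * ((w⁻¹ : ℤ_[p]ˣ) : ℤ_[p]) = δ' := hδ'def.symm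
  linear_combination ((p : ℤ_[p]) ^ (m + 1) * (c : ℤ_[p]) ^ 2) * hk
    + ((p : ℤ_[p]) ^ (m + 1) * (c : ℤ_[p]) ^ 2) * hδ'eq


/-- A primitive `p`-hyperbolic form of exponent `m+1` admits a `ℤ`-basis in
which it is congruent to `ab + d·p^{m+1}·c²` modulo `p^{m+2}`, with `p ∤ d`. -/
theorem stmt_7 (p : ℕ) [Fact p.Prime] (m : ℕ) (N : TernaryForm) (hN : N.PosDef)
    (hNprim : N.Primitive) (hhyp : IsHyperbolic p (m + 1) N) :
    ∃ (x : Module.Basis (Fin 3) ℤ (Fin 3 → ℤ)) (d : ℤ), ¬ (p : ℤ) ∣ d ∧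
      ∀ a b c : ℤ, ((p : ℤ) ^ (m + 2)) ∣
        (N.eval (a • x 0 + b • x 1 + c • x 2) - (a * b + d * (p : ℤ) ^ (m + 1) * c ^ 2)) := by
  exact stmt_7_aux p m N hhyp
end

section
/- Let p be a prime and let N be a primitive positive definite ternary form which is p-hyperbolic with exponent j for some integer j ≥ 1. If K₁ and K₂ are two distinct subgroups of ℤ³ of index p with norm ideals 𝔫(K₁) = 𝔫(K₂) = pℤ, then {x ∈ ℤ³ : p divides Q_N(x)} = K₁ ∪ K₂. -/
/-- For a primitive `p`-hyperbolic form of exponent `j ≥ 1`, the locus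
`{x : p ∣ Q_N(x)}` is the union of the two index-`p` subgroups of norm `pℤ`. -/
theorem stmt_9 (p : ℕ) [Fact p.Prime] (N : TernaryForm) (hN : N.PosDef)
    (hNprim : N.Primitive) (j : ℕ) (hj : 1 ≤ j) (hhyp : IsHyperbolic p j N)
    (K₁ K₂ : AddSubgroup (Fin 3 → ℤ)) (hne : K₁ ≠ K₂)
    (h₁ : K₁.index = p) (h₂ : K₂.index = p)
    (hn₁ : N.normIdeal (K₁ : Set (Fin 3 → ℤ)) = Ideal.span {(p : ℤ)})
    (hn₂ : N.normIdeal (K₂ : Set (Fin 3 → ℤ)) = Ideal.span {(p : ℤ)}) :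
    {x : Fin 3 → ℤ | (p : ℤ) ∣ N.eval x} =
      (K₁ : Set (Fin 3 → ℤ)) ∪ (K₂ : Set (Fin 3 → ℤ)) := by
  obtain ⟨δ, hδ, B, hB⟩ := hhyp
  have hp : p.Prime := Fact.out
  haveI : NeZero p := ⟨hp.ne_zero⟩
  -- the coordinate-wise cast map ℤ³ → ℤ_p³
  set φ : (Fin 3 → ℤ) →+ (Fin 3 → ℤ_[p]) :=
    AddMonoidHom.mk' (fun v k => ((v k : ℤ) : ℤ_[p])) (by
      intro a b; funext k; push_cast [Pi.add_apply]; ring) with hφdef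
  have hφapp : ∀ (v : Fin 3 → ℤ) (k : Fin 3), φ v k = ((v k : ℤ) : ℤ_[p]) := fun v k => rfl
  -- the two linear forms mod p
  set f : Fin 3 → ((Fin 3 → ℤ) →+ ZMod p) := fun i =>
    ((PadicInt.toZMod.toAddMonoidHom).comp (B.coord i).toAddMonoidHom).comp φ with hfdef
  have hfval : ∀ (i : Fin 3) (v : Fin 3 → ℤ), f i v = PadicInt.toZMod (B.repr (φ v) i) := by
    intro i v
    simp [hfdef, Module.Basis.coord_apply]
  have hcast : ∀ v : Fin 3 → ℤ, N.eval (φ v) = ((N.eval v : ℤ) : ℤ_[p]) := by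
    intro v
    simp only [TernaryForm.eval, hφapp]
    push_cast
    ring
  -- key identity mod p
  have key : ∀ v : Fin 3 → ℤ, ((N.eval v : ℤ) : ZMod p) = f 0 v * f 1 v := by
    intro v
    have h1 : (B.repr (φ v) 0) • B 0 + (B.repr (φ v) 1) • B 1 + (B.repr (φ v) 2) • B 2 = φ v := by
      have := B.sum_repr (φ v)
      rwa [Fin.sum_univ_three] at this
    have h2 : N.eval (φ v)
        = B.repr (φ v) 0 * B.repr (φ v) 1 + δ * (p : ℤ_[p]) ^ j * (B.repr (φ v) 2) ^ 2 := by
      conv_lhs => rw [← h1]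
      exact hB _ _ _
    have h3 := congrArg PadicInt.toZMod h2
    rw [hcast, map_intCast] at h3
    have hp0 : (PadicInt.toZMod ((p : ℤ_[p]))) = (0 : ZMod p) := by
      rw [map_natCast]; exact ZMod.natCast_self p
    rw [h3, map_add, map_mul, map_mul, map_mul, map_pow, map_pow, hp0,
      zero_pow (by omega : j ≠ 0)]
    rw [hfval, hfval]
    ring
  -- divisibility criterion
  have hdvd : ∀ v : Fin 3 → ℤ, (p : ℤ) ∣ N.eval v ↔ (f 0 v = 0 ∨ f 1 v = 0) := by
    intro v
    rw [← ZMod.intCast_zmod_eq_zero_iff_dvd, key, mul_eq_zero]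
  -- primitivity: not all values divisible by p
  have hcontra : ¬ ∀ v : Fin 3 → ℤ, (p : ℤ) ∣ N.eval v := by
    intro h
    have hle : N.normIdeal Set.univ ≤ Ideal.span {(p : ℤ)} := by
      rw [TernaryForm.normIdeal, Ideal.span_le]
      rintro _ ⟨x, -, rfl⟩
      exact Ideal.mem_span_singleton.mpr (h x)
    rw [hNprim] at hle
    have hu : IsUnit ((p : ℤ)) := Ideal.span_singleton_eq_top.mp (top_le_iff.mp hle)
    have h2 := hp.two_le
    rcases Int.isUnit_iff.mp hu with h' | h' <;> omega
  -- each of the two forms is nonzero somewhere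
  have hnz : ∀ i : Fin 3, i = 0 ∨ i = 1 → ∃ v, f i v ≠ 0 := by
    rintro i (rfl | rfl)
    · by_contra h; push_neg at h
      exact hcontra fun v => (hdvd v).mpr (Or.inl (h v))
    · by_contra h; push_neg at h
      exact hcontra fun v => (hdvd v).mpr (Or.inr (h v))
  -- hence surjective
  have hsurj : ∀ i : Fin 3, (∃ v, f i v ≠ 0) → Function.Surjective (f i) := by
    rintro i ⟨v, hv⟩ w
    refine ⟨(w * (f i v)⁻¹).val • v, ?_⟩
    rw [map_nsmul, nsmul_eq_mul, ZMod.natCast_rightInverse _,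
      inv_mul_cancel_right₀ hv]
  -- kernels have index p
  have hker : ∀ i : Fin 3, Function.Surjective (f i) → (f i).ker.index = p := by
    intro i hs
    rw [AddSubgroup.index_ker, AddMonoidHom.range_eq_top.mpr hs,
      AddSubgroup.card_top, Nat.card_zmod]
  have hker0 : (f 0).ker.index = p := hker 0 (hsurj 0 (hnz 0 (Or.inl rfl)))
  have hker1 : (f 1).ker.index = p := hker 1 (hsurj 1 (hnz 1 (Or.inr rfl)))
  -- equal index and inclusion imply equality
  have heq : ∀ (K K' : AddSubgroup (Fin 3 → ℤ)), K ≤ K' → K.index = p → K'.index = p →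
      K = K' := by
    intro K K' h hK hK'
    refine le_antisymm h ?_
    have hrel := AddSubgroup.relIndex_mul_index h
    rw [hK, hK'] at hrel
    have : K.relIndex K' = 1 :=
      Nat.eq_of_mul_eq_mul_right hp.pos (by simpa using hrel)
    exact AddSubgroup.relIndex_eq_one.mp this
  -- classification of index-p subgroups of norm pℤ
  have hclass : ∀ K : AddSubgroup (Fin 3 → ℤ), K.index = p →
      N.normIdeal (K : Set (Fin 3 → ℤ)) = Ideal.span {(p : ℤ)} →
      K = (f 0).ker ∨ K = (f 1).ker := by
    intro K hKi hKn
    have hKdvd : ∀ x ∈ K, (p : ℤ) ∣ N.eval x := by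
      intro x hx
      rw [← Ideal.mem_span_singleton, ← hKn]
      exact Ideal.subset_span ⟨x, hx, rfl⟩
    by_cases hle0 : ∀ x ∈ K, f 0 x = 0
    · exact Or.inl (heq K _ (fun x hx => AddMonoidHom.mem_ker.mpr (hle0 x hx)) hKi hker0)
    · by_cases hle1 : ∀ x ∈ K, f 1 x = 0
      · exact Or.inr (heq K _ (fun x hx => AddMonoidHom.mem_ker.mpr (hle1 x hx)) hKi hker1)
      · exfalso
        push_neg at hle0 hle1
        obtain ⟨x, hxK, hx0⟩ := hle0
        obtain ⟨y, hyK, hy1⟩ := hle1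
        have hx1 : f 1 x = 0 := ((hdvd x).mp (hKdvd x hxK)).resolve_left hx0
        have hy0 : f 0 y = 0 := ((hdvd y).mp (hKdvd y hyK)).resolve_right hy1
        have hxy := (hdvd (x + y)).mp (hKdvd (x + y) (K.add_mem hxK hyK))
        rw [map_add, map_add, hx1, hy0, add_zero, zero_add] at hxy
        rcases hxy with h | h
        · exact hx0 h
        · exact hy1 h
  have hloc : {x : Fin 3 → ℤ | (p : ℤ) ∣ N.eval x}
      = ((f 0).ker : Set (Fin 3 → ℤ)) ∪ ((f 1).ker : Set (Fin 3 → ℤ)) := by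
    ext x
    simp only [Set.mem_setOf_eq, Set.mem_union, SetLike.mem_coe, AddMonoidHom.mem_ker]
    exact hdvd x
  rcases hclass K₁ h₁ hn₁ with rfl | rfl <;> rcases hclass K₂ h₂ hn₂ with rfl | rfl
  · exact absurd rfl hne
  · exact hloc
  · rw [hloc]; exact Set.union_comm _ _
  · exact absurd rfl hne
end

section
/- Let M and N be positive definite ternary forms lying in the same genus and let p be a prime. Let A and B be integer 3×3 matrices whose columns form ℤ-bases of the finite-index subgroups Λ_p(M) and Λ_p(N) of ℤ³, respectively. Then the positive definite ternary forms v ↦ Q_M(A v) and v ↦ Q_N(B v) lie in the same genus. -/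
namespace TernaryForm

variable {R : Type*} [CommRing R]

def pol0 (Q : TernaryForm) (v : Fin 3 → R) : R := 2*(Q.a:R)*v 0 + (Q.t:R)*v 1 + (Q.s:R)*v 2
def pol1 (Q : TernaryForm) (v : Fin 3 → R) : R := (Q.t:R)*v 0 + 2*(Q.b:R)*v 1 + (Q.r:R)*v 2
def pol2 (Q : TernaryForm) (v : Fin 3 → R) : R := (Q.s:R)*v 0 + (Q.r:R)*v 1 + 2*(Q.c:R)*v 2

lemma eval_add_sub (Q : TernaryForm) (x z : Fin 3 → R) :
    Q.eval (x + z) - Q.eval z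
      = Q.eval x + z 0 * Q.pol0 x + z 1 * Q.pol1 x + z 2 * Q.pol2 x := by
  simp only [eval, pol0, pol1, pol2, Pi.add_apply]; ring

lemma mem_lam_iff (p : ℕ) (Q : TernaryForm) (x : Fin 3 → R) :
    (∀ z : Fin 3 → R, (p:R) ∣ Q.eval (x + z) - Q.eval z) ↔
      ((p:R) ∣ Q.eval x ∧ (p:R) ∣ Q.pol0 x ∧ (p:R) ∣ Q.pol1 x ∧ (p:R) ∣ Q.pol2 x) := by
  constructor
  · intro h
    have h0 := h 0
    rw [eval_add_sub] at h0
    simp only [Pi.zero_apply, zero_mul, add_zero] at h0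
    have key : ∀ z : Fin 3 → R,
        (p:R) ∣ z 0 * Q.pol0 x + z 1 * Q.pol1 x + z 2 * Q.pol2 x := by
      intro z
      have hz := h z
      rw [eval_add_sub] at hz
      have : Q.eval x + z 0 * Q.pol0 x + z 1 * Q.pol1 x + z 2 * Q.pol2 x - Q.eval x
          = z 0 * Q.pol0 x + z 1 * Q.pol1 x + z 2 * Q.pol2 x := by ring
      simpa [this] using dvd_sub hz h0
    refine ⟨h0, ?_, ?_, ?_⟩
    · simpa using key ![1,0,0]
    · simpa using key ![0,1,0]
    · simpa using key ![0,0,1]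
  · rintro ⟨h0, h1, h2, h3⟩ z
    rw [eval_add_sub]
    exact dvd_add (dvd_add (dvd_add h0 (Dvd.dvd.mul_left h1 _)) (Dvd.dvd.mul_left h2 _))
      (Dvd.dvd.mul_left h3 _)

def lam (p : ℕ) (Q : TernaryForm) (R : Type*) [CommRing R] : Submodule R (Fin 3 → R) where
  carrier := {x | ∀ z : Fin 3 → R, (p:R) ∣ Q.eval (x + z) - Q.eval z}
  zero_mem' := by
    intro z; simp
  add_mem' := by
    intro x y hx hy
    rw [Set.mem_setOf_eq, mem_lam_iff] at hx hy ⊢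
    obtain ⟨hx0, hx1, hx2, hx3⟩ := hx
    obtain ⟨hy0, hy1, hy2, hy3⟩ := hy
    have he : Q.eval (x + y) = (Q.eval x + y 0 * Q.pol0 x + y 1 * Q.pol1 x + y 2 * Q.pol2 x)
        + Q.eval y := eq_add_of_sub_eq (Q.eval_add_sub x y)
    constructor
    · rw [he]
      exact dvd_add (dvd_add (dvd_add (dvd_add hx0 (hx1.mul_left _)) (hx2.mul_left _))
        (hx3.mul_left _)) hy0
    refine ⟨?_, ?_, ?_⟩
    · have : Q.pol0 (x + y) = Q.pol0 x + Q.pol0 y := by simp [pol0]; ring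
      rw [this]; exact dvd_add hx1 hy1
    · have : Q.pol1 (x + y) = Q.pol1 x + Q.pol1 y := by simp [pol1]; ring
      rw [this]; exact dvd_add hx2 hy2
    · have : Q.pol2 (x + y) = Q.pol2 x + Q.pol2 y := by simp [pol2]; ring
      rw [this]; exact dvd_add hx3 hy3
  smul_mem' := by
    intro c x hx
    rw [Set.mem_setOf_eq, mem_lam_iff] at hx ⊢
    obtain ⟨h0, h1, h2, h3⟩ := hx
    refine ⟨?_, ?_, ?_, ?_⟩
    · have : Q.eval (c • x) = c^2 * Q.eval x := by simp [eval]; ring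
      rw [this]; exact h0.mul_left _
    · have : Q.pol0 (c • x) = c * Q.pol0 x := by simp [pol0]; ring
      rw [this]; exact h1.mul_left _
    · have : Q.pol1 (c • x) = c * Q.pol1 x := by simp [pol1]; ring
      rw [this]; exact h2.mul_left _
    · have : Q.pol2 (c • x) = c * Q.pol2 x := by simp [pol2]; ring
      rw [this]; exact h3.mul_left _

lemma mem_lam_iff' (p : ℕ) (Q : TernaryForm) (x : Fin 3 → R) :
    x ∈ lam p Q R ↔
      ((p:R) ∣ Q.eval x ∧ (p:R) ∣ Q.pol0 x ∧ (p:R) ∣ Q.pol1 x ∧ (p:R) ∣ Q.pol2 x) :=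
  mem_lam_iff p Q x

lemma lambdaSet_eq (p : ℕ) (Q : TernaryForm) :
    LambdaSet p Q = (lam p Q ℤ : Set (Fin 3 → ℤ)) := rfl

/-- multiples of `p` are always in `lam`. -/
lemma p_smul_mem (p : ℕ) (Q : TernaryForm) (y : Fin 3 → R) :
    (p : R) • y ∈ lam p Q R := by
  rw [mem_lam_iff']
  refine ⟨?_, ?_, ?_, ?_⟩
  · have : Q.eval ((p:R) • y) = (p:R) * ((p:R) * Q.eval y) := by simp [eval]; ring
    rw [this]; exact Dvd.intro _ rfl
  · have : Q.pol0 ((p:R) • y) = (p:R) * Q.pol0 y := by simp [pol0]; ring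
    rw [this]; exact Dvd.intro _ rfl
  · have : Q.pol1 ((p:R) • y) = (p:R) * Q.pol1 y := by simp [pol1]; ring
    rw [this]; exact Dvd.intro _ rfl
  · have : Q.pol2 ((p:R) • y) = (p:R) * Q.pol2 y := by simp [pol2]; ring
    rw [this]; exact Dvd.intro _ rfl

end TernaryForm

namespace TernaryForm

variable {R : Type*} [CommRing R]

/-- coordinatewise cast of an integer vector -/
def castv (R : Type*) [CommRing R] (v : Fin 3 → ℤ) : Fin 3 → R := fun i => (v i : R)

lemma eval_castv (Q : TernaryForm) (v : Fin 3 → ℤ) :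
    Q.eval (castv R v) = ((Q.eval v : ℤ) : R) := by
  simp only [eval, castv]; push_cast; ring

lemma pol0_castv (Q : TernaryForm) (v : Fin 3 → ℤ) :
    Q.pol0 (castv R v) = ((Q.pol0 v : ℤ) : R) := by
  simp only [pol0, castv]; push_cast; ring

lemma pol1_castv (Q : TernaryForm) (v : Fin 3 → ℤ) :
    Q.pol1 (castv R v) = ((Q.pol1 v : ℤ) : R) := by
  simp only [pol1, castv]; push_cast; ring

lemma pol2_castv (Q : TernaryForm) (v : Fin 3 → ℤ) :
    Q.pol2 (castv R v) = ((Q.pol2 v : ℤ) : R) := by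
  simp only [pol2, castv]; push_cast; ring

lemma castv_mem_lam {p : ℕ} {Q : TernaryForm} {x : Fin 3 → ℤ}
    (hx : x ∈ lam p Q ℤ) : castv R x ∈ lam p Q R := by
  rw [mem_lam_iff'] at hx ⊢
  obtain ⟨h0, h1, h2, h3⟩ := hx
  refine ⟨?_, ?_, ?_, ?_⟩
  · rw [eval_castv]
    obtain ⟨k, hk⟩ := h0
    exact ⟨(k : R), by rw [hk]; push_cast; ring⟩
  · rw [pol0_castv]
    obtain ⟨k, hk⟩ := h1
    exact ⟨(k : R), by rw [hk]; push_cast; ring⟩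
  · rw [pol1_castv]
    obtain ⟨k, hk⟩ := h2
    exact ⟨(k : R), by rw [hk]; push_cast; ring⟩
  · rw [pol2_castv]
    obtain ⟨k, hk⟩ := h3
    exact ⟨(k : R), by rw [hk]; push_cast; ring⟩

lemma mulVec_castv (A : Matrix (Fin 3) (Fin 3) ℤ) (v : Fin 3 → ℤ) :
    (A.map (Int.cast : ℤ → R)).mulVec (castv R v) = castv R (A.mulVec v) := by
  funext i
  simp [Matrix.mulVec, dotProduct, castv, Fin.sum_univ_three, Matrix.map_apply]

end TernaryForm

namespace TernaryForm

variable {R : Type*} [CommRing R]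

lemma padic_int_dvd {p : ℕ} [Fact p.Prime] {k : ℤ} (h : (p : ℤ_[p]) ∣ ((k : ℤ_[p]))) :
    (p : ℤ) ∣ k :=
  (PadicInt.norm_int_lt_one_iff_dvd k).mp ((PadicInt.norm_lt_one_iff_dvd _).mpr h)

lemma padic_p_unit {ℓ p : ℕ} [Fact ℓ.Prime] (hp : p.Prime) (hne : ℓ ≠ p) :
    IsUnit (p : ℤ_[ℓ]) := by
  rw [PadicInt.isUnit_iff]
  have h1 : ‖((p:ℤ) : ℤ_[ℓ])‖ ≤ 1 := PadicInt.norm_le_one _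
  have h2 : ¬ ((ℓ:ℤ) ∣ (p:ℤ)) := by
    intro hd
    exact hne ((Nat.prime_dvd_prime_iff_eq (Fact.out) hp).mp (by exact_mod_cast hd))
  have h3 := (PadicInt.norm_int_lt_one_iff_dvd (p:ℤ)).not.mpr h2
  have h4 : ((p:ℤ) : ℤ_[ℓ]) = (p : ℤ_[ℓ]) := by push_cast; ring
  rw [h4] at h1 h3
  linarith [lt_or_ge ‖(p : ℤ_[ℓ])‖ 1]

lemma exists_int_add_p_mul {p : ℕ} [Fact p.Prime] (x : ℤ_[p]) :
    ∃ (m : ℤ) (y : ℤ_[p]), x = m + p * y := by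
  obtain ⟨n, -, hn⟩ := PadicInt.exists_mem_range x
  rw [PadicInt.maximalIdeal_eq_span_p, Ideal.mem_span_singleton] at hn
  obtain ⟨y, hy⟩ := hn
  exact ⟨n, y, by rw [← hy]; push_cast; ring⟩

lemma vec_decomp (x : Fin 3 → R) :
    x = x 0 • (Pi.single 0 1 : Fin 3 → R) + x 1 • (Pi.single 1 1 : Fin 3 → R)
      + x 2 • (Pi.single 2 1 : Fin 3 → R) := by
  funext j; fin_cases j <;> simp [Pi.single_apply]

lemma castv_single (i : Fin 3) : castv R (Pi.single i 1) = Pi.single i 1 := by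
  funext j
  simp [castv, Pi.single_apply]

lemma range_eq_lam (p ℓ : ℕ) [Fact ℓ.Prime] (hp : p.Prime) (Q : TernaryForm)
    (A : Matrix (Fin 3) (Fin 3) ℤ) (hA : Set.range A.mulVec = LambdaSet p Q) :
    LinearMap.range (Matrix.mulVecLin (A.map (Int.cast : ℤ → ℤ_[ℓ]))) = lam p Q ℤ_[ℓ] := by
  set Amap := A.map (Int.cast : ℤ → ℤ_[ℓ]) with hAmap
  have hcol : ∀ v : Fin 3 → ℤ, A.mulVec v ∈ lam p Q ℤ := by
    intro v
    have : A.mulVec v ∈ LambdaSet p Q := hA ▸ Set.mem_range_self v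
    exact this
  have hpe : ∀ i : Fin 3, ∃ w : Fin 3 → ℤ, A.mulVec w = (p:ℤ) • (Pi.single i 1 : Fin 3 → ℤ) := by
    intro i
    have h1 : ((p:ℤ) • (Pi.single i 1 : Fin 3 → ℤ)) ∈ LambdaSet p Q := p_smul_mem p Q _
    rw [← hA] at h1
    exact h1
  have hp_single_mem : ∀ i : Fin 3,
      ((p:ℤ_[ℓ]) • (Pi.single i 1 : Fin 3 → ℤ_[ℓ])) ∈ LinearMap.range Amap.mulVecLin := by
    intro i
    obtain ⟨w, hw⟩ := hpe i
    refine ⟨castv _ w, ?_⟩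
    rw [Matrix.mulVecLin_apply, mulVec_castv, hw]
    funext j
    simp [castv, Pi.single_apply, Pi.smul_apply]
  have hpy_mem : ∀ y : Fin 3 → ℤ_[ℓ], ((p:ℤ_[ℓ]) • y) ∈ LinearMap.range Amap.mulVecLin := by
    intro y
    have hdec : (p:ℤ_[ℓ]) • y = y 0 • ((p:ℤ_[ℓ]) • (Pi.single 0 1 : Fin 3 → ℤ_[ℓ]))
        + y 1 • ((p:ℤ_[ℓ]) • (Pi.single 1 1 : Fin 3 → ℤ_[ℓ]))
        + y 2 • ((p:ℤ_[ℓ]) • (Pi.single 2 1 : Fin 3 → ℤ_[ℓ])) := by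
      funext j; fin_cases j <;> simp [Pi.single_apply] <;> ring
    rw [hdec]
    exact add_mem (add_mem (Submodule.smul_mem _ _ (hp_single_mem 0))
      (Submodule.smul_mem _ _ (hp_single_mem 1))) (Submodule.smul_mem _ _ (hp_single_mem 2))
  apply le_antisymm
  · rintro x ⟨v, rfl⟩
    rw [Matrix.mulVecLin_apply]
    have hsingle : ∀ i : Fin 3, Amap.mulVec (Pi.single i 1) ∈ lam p Q ℤ_[ℓ] := by
      intro i
      have : Amap.mulVec (Pi.single i 1) = castv _ (A.mulVec (Pi.single i 1)) := by
        rw [← castv_single (R := ℤ_[ℓ]) i, mulVec_castv]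
      rw [this]
      exact castv_mem_lam (hcol _)
    have hdec : Amap.mulVec v = v 0 • Amap.mulVec (Pi.single 0 1)
        + v 1 • Amap.mulVec (Pi.single 1 1) + v 2 • Amap.mulVec (Pi.single 2 1) := by
      conv_lhs => rw [vec_decomp v]
      rw [Matrix.mulVec_add, Matrix.mulVec_add, Matrix.mulVec_smul, Matrix.mulVec_smul,
        Matrix.mulVec_smul]
    rw [hdec]
    exact add_mem (add_mem (Submodule.smul_mem _ _ (hsingle 0))
      (Submodule.smul_mem _ _ (hsingle 1))) (Submodule.smul_mem _ _ (hsingle 2))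
  · intro x hx
    by_cases hlp : ℓ = p
    · subst hlp
      choose m y hxy using fun i => exists_int_add_p_mul (p := ℓ) (x i)
      have hxdec : x = castv ℤ_[ℓ] m + (ℓ:ℤ_[ℓ]) • y := by
        funext i
        simp only [Pi.add_apply, Pi.smul_apply, castv, smul_eq_mul]
        rw [hxy i]
      have hpy : ((ℓ:ℤ_[ℓ]) • y) ∈ lam ℓ Q ℤ_[ℓ] := p_smul_mem ℓ Q y
      have hn : castv ℤ_[ℓ] m ∈ lam ℓ Q ℤ_[ℓ] := by
        have := Submodule.sub_mem _ hx hpy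
        rwa [hxdec, add_sub_cancel_right] at this
      have hmZ : m ∈ lam ℓ Q ℤ := by
        rw [mem_lam_iff'] at hn ⊢
        rw [eval_castv, pol0_castv, pol1_castv, pol2_castv] at hn
        exact ⟨by exact_mod_cast padic_int_dvd hn.1, by exact_mod_cast padic_int_dvd hn.2.1,
          by exact_mod_cast padic_int_dvd hn.2.2.1, by exact_mod_cast padic_int_dvd hn.2.2.2⟩
      have : m ∈ LambdaSet ℓ Q := hmZ
      rw [← hA] at this
      obtain ⟨w, hw⟩ := this
      rw [hxdec]
      refine add_mem ⟨castv _ w, ?_⟩ (hpy_mem y)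
      rw [Matrix.mulVecLin_apply, mulVec_castv, hw]
    · obtain ⟨u, hu⟩ := padic_p_unit (ℓ := ℓ) hp hlp
      have hsingle : ∀ i : Fin 3,
          (Pi.single i 1 : Fin 3 → ℤ_[ℓ]) ∈ LinearMap.range Amap.mulVecLin := by
        intro i
        have h1 := hp_single_mem i
        have h2 : (Pi.single i 1 : Fin 3 → ℤ_[ℓ])
            = (↑u⁻¹ : ℤ_[ℓ]) • ((p:ℤ_[ℓ]) • (Pi.single i 1 : Fin 3 → ℤ_[ℓ])) := by
          rw [smul_smul, ← hu, Units.inv_mul, one_smul]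
        rw [h2]
        exact Submodule.smul_mem _ _ h1
      rw [vec_decomp x]
      exact add_mem (add_mem (Submodule.smul_mem _ _ (hsingle 0))
        (Submodule.smul_mem _ _ (hsingle 1))) (Submodule.smul_mem _ _ (hsingle 2))

end TernaryForm

namespace TernaryForm

variable {R : Type*} [CommRing R]

/-- Pullback of a ternary form along an integer matrix. -/
def pull (Q : TernaryForm) (A : Matrix (Fin 3) (Fin 3) ℤ) : TernaryForm where
  a := Q.eval (A.mulVec ![1,0,0])
  b := Q.eval (A.mulVec ![0,1,0])
  c := Q.eval (A.mulVec ![0,0,1])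
  r := Q.eval (A.mulVec ![0,1,1]) - Q.eval (A.mulVec ![0,1,0]) - Q.eval (A.mulVec ![0,0,1])
  s := Q.eval (A.mulVec ![1,0,1]) - Q.eval (A.mulVec ![1,0,0]) - Q.eval (A.mulVec ![0,0,1])
  t := Q.eval (A.mulVec ![1,1,0]) - Q.eval (A.mulVec ![1,0,0]) - Q.eval (A.mulVec ![0,1,0])

lemma pull_eval (Q : TernaryForm) (A : Matrix (Fin 3) (Fin 3) ℤ) (v : Fin 3 → R) :
    (pull Q A).eval v = Q.eval ((A.map (Int.cast : ℤ → R)).mulVec v) := by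
  simp only [pull, eval, Matrix.mulVec, dotProduct, Fin.sum_univ_three,
    Matrix.map_apply, Matrix.cons_val_zero, Matrix.cons_val_one, Matrix.head_cons,
    Matrix.cons_val_two, Matrix.tail_cons]
  push_cast
  ring

lemma eval_congr {Q1 Q2 : TernaryForm} (h : ∀ v : Fin 3 → ℤ, Q1.eval v = Q2.eval v)
    (v : Fin 3 → R) : Q1.eval v = Q2.eval v := by
  have e1 := h ![1,0,0]
  have e2 := h ![0,1,0]
  have e3 := h ![0,0,1]
  have e4 := h ![0,1,1]
  have e5 := h ![1,0,1]
  have e6 := h ![1,1,0]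
  simp only [eval, Matrix.cons_val_zero, Matrix.cons_val_one, Matrix.head_cons,
    Matrix.cons_val_two, Matrix.tail_cons, Int.cast_id] at e1 e2 e3 e4 e5 e6
  have ha : Q1.a = Q2.a := by linarith
  have hb : Q1.b = Q2.b := by linarith
  have hc : Q1.c = Q2.c := by linarith
  have hr : Q1.r = Q2.r := by linarith
  have hs : Q1.s = Q2.s := by linarith
  have ht : Q1.t = Q2.t := by linarith
  simp only [eval, ha, hb, hc, hr, hs, ht]

/-- Transport membership in `lam` along an isometry given by an invertible matrix. -/
lemma mulVec_mem_lam {p : ℕ} {Q1 Q2 : TernaryForm} (U : Matrix (Fin 3) (Fin 3) R)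
    (hUdet : IsUnit U.det) (h : ∀ v : Fin 3 → R, Q2.eval v = Q1.eval (U.mulVec v))
    {x : Fin 3 → R} (hx : x ∈ lam p Q2 R) : U.mulVec x ∈ lam p Q1 R := by
  intro z
  have h1 : U.mulVec (U⁻¹.mulVec z) = z := by
    rw [Matrix.mulVec_mulVec, Matrix.mul_nonsing_inv _ hUdet, Matrix.one_mulVec]
  have h2 : Q1.eval (U.mulVec x + z) - Q1.eval z
      = Q2.eval (x + U⁻¹.mulVec z) - Q2.eval (U⁻¹.mulVec z) := by
    rw [h (x + U⁻¹.mulVec z), h (U⁻¹.mulVec z), Matrix.mulVec_add, h1]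
  rw [h2]
  exact hx (U⁻¹.mulVec z)

end TernaryForm


open TernaryForm

/-- If `M` and `N` lie in the same genus, then the forms obtained by
restricting to `Λ_p(M)` and `Λ_p(N)` (via matrices whose columns are `ℤ`-bases of these
subgroups) lie in the same genus. -/
theorem stmt_10 (M N : TernaryForm) (hM : M.PosDef) (hN : N.PosDef) (hg : SameGenus M N)
    (p : ℕ) (hp : p.Prime) (A B : Matrix (Fin 3) (Fin 3) ℤ)
    (hAinj : Function.Injective A.mulVec) (hA : Set.range A.mulVec = LambdaSet p M)
    (hBinj : Function.Injective B.mulVec) (hB : Set.range B.mulVec = LambdaSet p N)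
    (M' N' : TernaryForm) (hM' : M'.PosDef) (hN' : N'.PosDef)
    (hMA : ∀ v : Fin 3 → ℤ, M'.eval v = M.eval (A.mulVec v))
    (hNB : ∀ v : Fin 3 → ℤ, N'.eval v = N.eval (B.mulVec v)) :
    SameGenus M' N' := by
  intro ℓ hℓ
  obtain ⟨U, hUdet, hU⟩ := hg ℓ
  set Amap : Matrix (Fin 3) (Fin 3) ℤ_[ℓ] := A.map (Int.cast : ℤ → ℤ_[ℓ]) with hAmapdef
  set Bmap : Matrix (Fin 3) (Fin 3) ℤ_[ℓ] := B.map (Int.cast : ℤ → ℤ_[ℓ]) with hBmapdef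
  have hlamA := range_eq_lam p ℓ hp M A hA
  have hlamB := range_eq_lam p ℓ hp N B hB
  have hUinv : IsUnit (U⁻¹).det := by
    rw [Matrix.det_nonsing_inv]
    exact isUnit_ringInverse.mpr hUdet
  have hUU : ∀ v : Fin 3 → ℤ_[ℓ], U.mulVec (U⁻¹.mulVec v) = v := by
    intro v
    rw [Matrix.mulVec_mulVec, Matrix.mul_nonsing_inv _ hUdet, Matrix.one_mulVec]
  have hU' : ∀ v : Fin 3 → ℤ_[ℓ], M.eval v = N.eval (U⁻¹.mulVec v) := by
    intro v
    conv_lhs => rw [← hUU v]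
    rw [← hU]
  have hUB : ∀ v : Fin 3 → ℤ_[ℓ], (U * Bmap).mulVec v ∈ lam p M ℤ_[ℓ] := by
    intro v
    rw [← Matrix.mulVec_mulVec]
    apply mulVec_mem_lam U hUdet hU
    rw [← hlamB]
    exact ⟨v, rfl⟩
  have hUA : ∀ v : Fin 3 → ℤ_[ℓ], (U⁻¹ * Amap).mulVec v ∈ lam p N ℤ_[ℓ] := by
    intro v
    rw [← Matrix.mulVec_mulVec]
    apply mulVec_mem_lam U⁻¹ hUinv hU'
    rw [← hlamA]
    exact ⟨v, rfl⟩
  have hCex : ∀ i : Fin 3, ∃ c : Fin 3 → ℤ_[ℓ],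
      Amap.mulVec c = (U * Bmap).mulVec (Pi.single i 1) := by
    intro i
    have h1 := hUB (Pi.single i 1)
    rw [← hlamA] at h1
    obtain ⟨c, hc⟩ := h1
    exact ⟨c, hc⟩
  have hC'ex : ∀ i : Fin 3, ∃ c : Fin 3 → ℤ_[ℓ],
      Bmap.mulVec c = (U⁻¹ * Amap).mulVec (Pi.single i 1) := by
    intro i
    have h1 := hUA (Pi.single i 1)
    rw [← hlamB] at h1
    obtain ⟨c, hc⟩ := h1
    exact ⟨c, hc⟩
  choose c hc using hCex
  choose c' hc' using hC'ex
  set C : Matrix (Fin 3) (Fin 3) ℤ_[ℓ] := Matrix.of fun j i => c i j with hCdef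
  set C' : Matrix (Fin 3) (Fin 3) ℤ_[ℓ] := Matrix.of fun j i => c' i j with hC'def
  have hCsingle : ∀ i : Fin 3, C.mulVec (Pi.single i 1) = c i := by
    intro i
    funext k
    simp [hCdef, Matrix.mulVec_single]
  have hC'single : ∀ i : Fin 3, C'.mulVec (Pi.single i 1) = c' i := by
    intro i
    funext k
    simp [hC'def, Matrix.mulVec_single]
  have hACUB : Amap * C = U * Bmap := by
    ext j i
    have h1 : (Amap * C).mulVec (Pi.single i 1) = (U * Bmap).mulVec (Pi.single i 1) := by
      rw [← Matrix.mulVec_mulVec, hCsingle, hc]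
    have h2 := congrFun h1 j
    simpa [Matrix.mulVec_single] using h2
  have hBC'UA : Bmap * C' = U⁻¹ * Amap := by
    ext j i
    have h1 : (Bmap * C').mulVec (Pi.single i 1) = (U⁻¹ * Amap).mulVec (Pi.single i 1) := by
      rw [← Matrix.mulVec_mulVec, hC'single, hc']
    have h2 := congrFun h1 j
    simpa [Matrix.mulVec_single] using h2
  -- determinant of Amap is nonzero
  have hpe : ∀ i : Fin 3, ∃ w : Fin 3 → ℤ,
      A.mulVec w = (p:ℤ) • (Pi.single i 1 : Fin 3 → ℤ) := by
    intro i
    have h1 : ((p:ℤ) • (Pi.single i 1 : Fin 3 → ℤ)) ∈ LambdaSet p M := p_smul_mem p M _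
    rw [← hA] at h1
    exact h1
  choose w hw using hpe
  set W : Matrix (Fin 3) (Fin 3) ℤ_[ℓ] := Matrix.of fun j i => ((w i j : ℤ) : ℤ_[ℓ]) with hWdef
  have hAW : Amap * W = (p : ℤ_[ℓ]) • (1 : Matrix (Fin 3) (Fin 3) ℤ_[ℓ]) := by
    ext j i
    have h2 := congrFun (hw i) j
    simp only [Matrix.mulVec, dotProduct, Fin.sum_univ_three, Pi.smul_apply,
      Pi.single_apply, smul_eq_mul] at h2
    simp only [Matrix.mul_apply, Fin.sum_univ_three, Matrix.map_apply, hWdef,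
      Matrix.of_apply, Matrix.smul_apply, Matrix.one_apply, smul_eq_mul, hAmapdef]
    have h3 := congrArg (fun t : ℤ => (t : ℤ_[ℓ])) h2
    push_cast [apply_ite (fun t : ℤ => (t : ℤ_[ℓ]))] at h3
    simpa using h3
  have hdetA : Amap.det ≠ 0 := by
    intro h0
    have h1 : (Amap * W).det = 0 := by rw [Matrix.det_mul, h0, zero_mul]
    rw [hAW, Matrix.det_smul, Matrix.det_one, mul_one] at h1
    have h2 : (p : ℤ_[ℓ]) ≠ 0 := Nat.cast_ne_zero.mpr hp.ne_zero
    exact pow_ne_zero _ h2 h1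
  have hCC' : Amap * (C * C') = Amap := by
    calc Amap * (C * C') = (Amap * C) * C' := by rw [mul_assoc]
    _ = U * (Bmap * C') := by rw [hACUB, mul_assoc]
    _ = (U * U⁻¹) * Amap := by rw [hBC'UA, mul_assoc]
    _ = Amap := by rw [Matrix.mul_nonsing_inv _ hUdet, one_mul]
  have hdetCC : C.det * C'.det = 1 := by
    have h1 := congrArg Matrix.det hCC'
    rw [Matrix.det_mul, Matrix.det_mul] at h1
    have h2 : Amap.det * (C.det * C'.det) = Amap.det * 1 := by
      rw [mul_one]; exact h1
    exact mul_left_cancel₀ hdetA h2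
  have hCunit : IsUnit C.det := IsUnit.of_mul_eq_one _ hdetCC
  -- the evaluation identities over ℤ_[ℓ]
  have hBid : B.map (Int.cast : ℤ → ℤ) = B := by
    ext j i; simp [Matrix.map_apply]
  have hAid : A.map (Int.cast : ℤ → ℤ) = A := by
    ext j i; simp [Matrix.map_apply]
  have hNpull : ∀ v : Fin 3 → ℤ_[ℓ], N'.eval v = N.eval (Bmap.mulVec v) := by
    intro v
    have hz : ∀ z : Fin 3 → ℤ, N'.eval z = (pull N B).eval z := by
      intro z
      rw [hNB z, pull_eval, hBid]
    rw [eval_congr hz v, pull_eval]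
  have hMpull : ∀ v : Fin 3 → ℤ_[ℓ], M'.eval v = M.eval (Amap.mulVec v) := by
    intro v
    have hz : ∀ z : Fin 3 → ℤ, M'.eval z = (pull M A).eval z := by
      intro z
      rw [hMA z, pull_eval, hAid]
    rw [eval_congr hz v, pull_eval]
  refine ⟨C, hCunit, ?_⟩
  intro v
  rw [hNpull v, hMpull (C.mulVec v), Matrix.mulVec_mulVec, hACUB, ← Matrix.mulVec_mulVec,
    ← hU]
end

section
/- Let p be a prime and let N be a primitive positive definite ternary form which is p-hyperbolic with exponent j for some integer j ≥ 1. Let K₁ and K₂ be two distinct subgroups of ℤ³ of index p with norm ideals 𝔫(K₁) = 𝔫(K₂) = pℤ. Then Λ_p(N) = K₁ ∩ K₂, and Λ_p(N) has index p in each of K₁ and K₂; moreover, if j ≥ 2, then 𝔫(Λ_p(N)) = p²ℤ. -/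
section helpers

variable (p : ℕ) [Fact p.Prime]

/-- coordinatewise coercion `ℤ³ → ℤ_p³` as an additive map. -/
noncomputable def iotaP : (Fin 3 → ℤ) →+ (Fin 3 → ℤ_[p]) where
  toFun x i := (x i : ℤ_[p])
  map_zero' := by funext i; simp
  map_add' x y := by funext i; simp

lemma iotaP_single (i : Fin 3) : iotaP p (Pi.single i 1) = Pi.single i 1 := by
  funext j
  simp [iotaP, Pi.single_apply, apply_ite (Int.cast : ℤ → ℤ_[p])]

lemma castEval (N : TernaryForm) (x : Fin 3 → ℤ) :
    ((N.eval x : ℤ) : ℤ_[p]) = N.eval (iotaP p x) := by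
  simp only [TernaryForm.eval, iotaP, AddMonoidHom.coe_mk, ZeroHom.coe_mk]
  push_cast
  ring

lemma eval_polar (N : TernaryForm) {R : Type*} [CommRing R] (x z : Fin 3 → R) :
    N.eval (x + z) - N.eval x - N.eval z
      = z 0 * (N.eval (x + Pi.single 0 1) - N.eval x - N.eval (Pi.single 0 1))
      + z 1 * (N.eval (x + Pi.single 1 1) - N.eval x - N.eval (Pi.single 1 1))
      + z 2 * (N.eval (x + Pi.single 2 1) - N.eval x - N.eval (Pi.single 2 1)) := by
  simp [TernaryForm.eval, Pi.single_apply]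
  ring

lemma evalZero (N : TernaryForm) {R : Type*} [CommRing R] :
    N.eval (0 : Fin 3 → R) = 0 := by simp [TernaryForm.eval]

lemma eval_smul (N : TernaryForm) (n : ℤ) (w : Fin 3 → ℤ) :
    N.eval (n • w) = n ^ 2 * N.eval w := by
  simp [TernaryForm.eval, Pi.smul_apply, smul_eq_mul]
  ring

lemma decomp3 {R : Type*} [CommRing R] (z : Fin 3 → R) :
    z = z 0 • (Pi.single 0 1 : Fin 3 → R) + z 1 • (Pi.single 1 1 : Fin 3 → R)
        + z 2 • (Pi.single 2 1 : Fin 3 → R) := by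
  funext j
  fin_cases j <;> simp [Pi.single_apply]

lemma dvdIntP (n : ℤ) : (p : ℤ_[p]) ∣ (n : ℤ_[p]) ↔ (p : ℤ) ∣ n := by
  simpa using PadicInt.pow_p_dvd_int_iff (p := p) 1 n

/-- The subgroup of `x ∈ ℤ³` whose `k`-th coordinate w.r.t. a `ℤ_p`-basis is
divisible by `p`. -/
noncomputable def coordSub (B : Module.Basis (Fin 3) ℤ_[p] (Fin 3 → ℤ_[p])) (k : Fin 3) :
    AddSubgroup (Fin 3 → ℤ) where
  carrier := {x | (p : ℤ_[p]) ∣ B.repr (iotaP p x) k}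
  add_mem' {x y} hx hy := by
    simp only [Set.mem_setOf_eq] at *
    rw [map_add, map_add, Finsupp.add_apply]
    exact dvd_add hx hy
  zero_mem' := by simp
  neg_mem' {x} hx := by
    simp only [Set.mem_setOf_eq] at *
    rw [map_neg, map_neg, Finsupp.neg_apply]
    exact (dvd_neg).mpr hx

lemma mem_coordSub (B : Module.Basis (Fin 3) ℤ_[p] (Fin 3 → ℤ_[p])) (k : Fin 3)
    (x : Fin 3 → ℤ) : x ∈ coordSub p B k ↔ (p : ℤ_[p]) ∣ B.repr (iotaP p x) k :=
  Iff.rfl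

lemma coordSub_ne_top (B : Module.Basis (Fin 3) ℤ_[p] (Fin 3 → ℤ_[p])) (k : Fin 3) :
    coordSub p B k ≠ ⊤ := by
  intro htop
  have hall : ∀ x : Fin 3 → ℤ, (p : ℤ_[p]) ∣ B.repr (iotaP p x) k := by
    intro x
    have : x ∈ coordSub p B k := htop.symm ▸ AddSubgroup.mem_top x
    exact this
  have hsingle : ∀ i : Fin 3, (p : ℤ_[p]) ∣ B.repr (Pi.single i 1) k := by
    intro i
    have := hall (Pi.single i 1)
    rwa [iotaP_single] at this
  have hcomb : B.repr (B k) k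
      = B k 0 * B.repr (Pi.single 0 1 : Fin 3 → ℤ_[p]) k
        + B k 1 * B.repr (Pi.single 1 1 : Fin 3 → ℤ_[p]) k
        + B k 2 * B.repr (Pi.single 2 1 : Fin 3 → ℤ_[p]) k := by
    conv_lhs => rw [decomp3 (B k)]
    rw [map_add, map_add, map_smul, map_smul, map_smul]
    simp [Finsupp.add_apply, Finsupp.smul_apply, smul_eq_mul]
  have hone : B.repr (B k) k = 1 := by simp
  have hdvd : (p : ℤ_[p]) ∣ 1 := by
    rw [← hone, hcomb]
    exact dvd_add (dvd_add ((hsingle 0).mul_left _) ((hsingle 1).mul_left _))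
      ((hsingle 2).mul_left _)
  exact (PadicInt.prime_p (p := p)).not_isUnit (isUnit_of_dvd_one hdvd)

lemma eq_of_le_of_index_eq {G : Type*} [AddCommGroup G] {H K : AddSubgroup G}
    (hle : H ≤ K) (h : H.index = K.index) (hne : K.index ≠ 0) : H = K := by
  have hm := AddSubgroup.relIndex_mul_index hle
  rw [h] at hm
  have h1 : H.relIndex K = 1 := by
    have := Nat.eq_of_mul_eq_mul_right (Nat.pos_of_ne_zero hne) (hm.trans (one_mul _).symm)
    exact this
  exact le_antisymm hle (AddSubgroup.relIndex_eq_one.mp h1)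

lemma relindex_inf_eq_p {hp : p.Prime} {H K : AddSubgroup (Fin 3 → ℤ)}
    (hH : H.index = p) (hK : K.index = p) (hne : H ≠ K) :
    (H ⊓ K).relIndex H = p := by
  rw [inf_comm, AddSubgroup.inf_relIndex_right]
  have hd : K.relIndex H ∣ K.index := AddSubgroup.relIndex_dvd_index_of_normal K H
  rw [hK] at hd
  rcases hp.eq_one_or_self_of_dvd _ hd with h1 | h1
  · exfalso
    have hle : H ≤ K := AddSubgroup.relIndex_eq_one.mp h1
    exact hne (eq_of_le_of_index_eq hle (hH.trans hK.symm) (hK ▸ hp.pos.ne'))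
  · exact h1

end helpers

set_option maxHeartbeats 2000000 in
/-- For a primitive `p`-hyperbolic form of exponent `j ≥ 1` with two
distinct index-`p` subgroups `K₁, K₂` of norm `pℤ`: `Λ_p(N) = K₁ ∩ K₂`, `Λ_p(N)` has
index `p` in each `K_i`, and if `j ≥ 2` then `𝔫(Λ_p(N)) = p²ℤ`. -/
theorem stmt_11 (p : ℕ) [Fact p.Prime] (N : TernaryForm) (hN : N.PosDef)
    (hNprim : N.Primitive) (j : ℕ) (hj : 1 ≤ j) (hhyp : IsHyperbolic p j N)
    (K₁ K₂ : AddSubgroup (Fin 3 → ℤ)) (hne : K₁ ≠ K₂)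
    (h₁ : K₁.index = p) (h₂ : K₂.index = p)
    (hn₁ : N.normIdeal (K₁ : Set (Fin 3 → ℤ)) = Ideal.span {(p : ℤ)})
    (hn₂ : N.normIdeal (K₂ : Set (Fin 3 → ℤ)) = Ideal.span {(p : ℤ)}) :
    LambdaSet p N = (K₁ : Set (Fin 3 → ℤ)) ∩ (K₂ : Set (Fin 3 → ℤ)) ∧
      (K₁ ⊓ K₂).relIndex K₁ = p ∧ (K₁ ⊓ K₂).relIndex K₂ = p ∧
      (2 ≤ j → N.normIdeal (LambdaSet p N) = Ideal.span {(p : ℤ) ^ 2}) := by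
  obtain ⟨δ, hδ, B, hB⟩ := hhyp
  have hp : p.Prime := Fact.out
  -- key formula in coordinates
  have key : ∀ z : Fin 3 → ℤ_[p],
      N.eval z = B.repr z 0 * B.repr z 1 + δ * (p : ℤ_[p]) ^ j * B.repr z 2 ^ 2 := by
    intro z
    have hz := B.sum_repr z
    rw [Fin.sum_univ_three] at hz
    conv_lhs => rw [← hz]
    exact hB _ _ _
  -- characterization of the Lambda set
  have charLam : ∀ x : Fin 3 → ℤ, x ∈ LambdaSet p N ↔
      ((p : ℤ_[p]) ∣ B.repr (iotaP p x) 0 ∧ (p : ℤ_[p]) ∣ B.repr (iotaP p x) 1) := by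
    intro x
    simp only [LambdaSet, Set.mem_setOf_eq]
    constructor
    · intro h
      have h0 : (p : ℤ) ∣ N.eval x := by
        have := h 0
        simpa [evalZero] using this
      have hLint : ∀ z' : Fin 3 → ℤ, (p : ℤ_[p]) ∣
          (N.eval (iotaP p x + iotaP p z') - N.eval (iotaP p x) - N.eval (iotaP p z')) := by
        intro z'
        have hint : (p : ℤ) ∣ (N.eval (x + z') - N.eval z') - N.eval x :=
          dvd_sub (h z') h0
        have hc := (dvdIntP p _).mpr hint
        rw [Int.cast_sub, Int.cast_sub, castEval, castEval, castEval, map_add] at hc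
        have e : N.eval (iotaP p x + iotaP p z') - N.eval (iotaP p z') - N.eval (iotaP p x)
            = N.eval (iotaP p x + iotaP p z') - N.eval (iotaP p x) - N.eval (iotaP p z') := by
          ring
        rwa [e] at hc
      have hLf : ∀ w : Fin 3 → ℤ_[p], (p : ℤ_[p]) ∣
          (N.eval (iotaP p x + w) - N.eval (iotaP p x) - N.eval w) := by
        intro w
        rw [eval_polar]
        have h0' := hLint (Pi.single 0 1)
        have h1' := hLint (Pi.single 1 1)
        have h2' := hLint (Pi.single 2 1)
        rw [iotaP_single] at h0' h1' h2'
        exact dvd_add (dvd_add (h0'.mul_left _) (h1'.mul_left _)) (h2'.mul_left _)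
      have hx' := B.sum_repr (iotaP p x)
      rw [Fin.sum_univ_three] at hx'
      constructor
      · have h1 := hLf (B 1)
        have e1 : iotaP p x + B 1 = B.repr (iotaP p x) 0 • B 0
            + (B.repr (iotaP p x) 1 + 1) • B 1 + B.repr (iotaP p x) 2 • B 2 := by
          conv_lhs => rw [← hx']
          rw [add_smul, one_smul]
          abel
        have e3 : N.eval (B 1) = 0 := by
          have := hB 0 1 0
          simpa using this
        rw [e1, hB, e3, key] at h1
        have e4 : B.repr (iotaP p x) 0 * (B.repr (iotaP p x) 1 + 1)
              + δ * (p : ℤ_[p]) ^ j * B.repr (iotaP p x) 2 ^ 2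
            - (B.repr (iotaP p x) 0 * B.repr (iotaP p x) 1
              + δ * (p : ℤ_[p]) ^ j * B.repr (iotaP p x) 2 ^ 2) - 0
            = B.repr (iotaP p x) 0 := by ring
        rwa [e4] at h1
      · have h1 := hLf (B 0)
        have e1 : iotaP p x + B 0 = (B.repr (iotaP p x) 0 + 1) • B 0
            + B.repr (iotaP p x) 1 • B 1 + B.repr (iotaP p x) 2 • B 2 := by
          conv_lhs => rw [← hx']
          rw [add_smul, one_smul]
          abel
        have e3 : N.eval (B 0) = 0 := by
          have := hB 1 0 0
          simpa using this
        rw [e1, hB, e3, key] at h1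
        have e4 : (B.repr (iotaP p x) 0 + 1) * B.repr (iotaP p x) 1
              + δ * (p : ℤ_[p]) ^ j * B.repr (iotaP p x) 2 ^ 2
            - (B.repr (iotaP p x) 0 * B.repr (iotaP p x) 1
              + δ * (p : ℤ_[p]) ^ j * B.repr (iotaP p x) 2 ^ 2) - 0
            = B.repr (iotaP p x) 1 := by ring
        rwa [e4] at h1
    · rintro ⟨ha, hb⟩ z
      rw [← dvdIntP p]
      rw [Int.cast_sub, castEval, castEval, map_add]
      have epj : ((p : ℤ_[p]) ^ j) = (p : ℤ_[p]) * (p : ℤ_[p]) ^ (j - 1) := by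
        rw [← pow_succ', Nat.sub_add_cancel hj]
      have e : N.eval (iotaP p x + iotaP p z) - N.eval (iotaP p z)
          = B.repr (iotaP p x) 0 * (B.repr (iotaP p x) 1 + B.repr (iotaP p z) 1)
            + B.repr (iotaP p x) 1 * B.repr (iotaP p z) 0
            + (p : ℤ_[p]) * ((p : ℤ_[p]) ^ (j - 1) * (δ * (B.repr (iotaP p x) 2 ^ 2
              + 2 * B.repr (iotaP p x) 2 * B.repr (iotaP p z) 2))) := by
        rw [key, key, map_add]
        simp only [Finsupp.add_apply]
        rw [epj]
        ring
      rw [e]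
      exact dvd_add (dvd_add (dvd_mul_of_dvd_left ha _) (dvd_mul_of_dvd_left hb _))
        (dvd_mul_right _ _)
  -- dichotomy on subgroups with norm ideal pℤ
  have dich : ∀ K : AddSubgroup (Fin 3 → ℤ),
      N.normIdeal (K : Set (Fin 3 → ℤ)) = Ideal.span {(p : ℤ)} → ∀ x ∈ K,
      (p : ℤ_[p]) ∣ B.repr (iotaP p x) 0 ∨ (p : ℤ_[p]) ∣ B.repr (iotaP p x) 1 := by
    intro K hK x hx
    have h1 : (p : ℤ) ∣ N.eval x := by
      have hmem : N.eval x ∈ N.normIdeal (K : Set (Fin 3 → ℤ)) :=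
        Ideal.subset_span ⟨x, hx, rfl⟩
      rw [hK, Ideal.mem_span_singleton] at hmem
      exact hmem
    have h2 : (p : ℤ_[p]) ∣ N.eval (iotaP p x) := by
      rw [← castEval]
      exact (dvdIntP p _).mpr h1
    rw [key] at h2
    have hpj : (p : ℤ_[p]) ∣ δ * (p : ℤ_[p]) ^ j * B.repr (iotaP p x) 2 ^ 2 :=
      dvd_mul_of_dvd_left
        (dvd_mul_of_dvd_right (dvd_pow_self _ (Nat.one_le_iff_ne_zero.mp hj)) δ) _
    have h3 : (p : ℤ_[p]) ∣ B.repr (iotaP p x) 0 * B.repr (iotaP p x) 1 := by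
      have := dvd_sub h2 hpj
      rwa [add_sub_cancel_right] at this
    exact (PadicInt.prime_p.dvd_mul).mp h3
  -- each Kᵢ equals one of the coordinate subgroups
  have subAB : ∀ K : AddSubgroup (Fin 3 → ℤ), K.index = p →
      N.normIdeal (K : Set (Fin 3 → ℤ)) = Ideal.span {(p : ℤ)} →
      K = coordSub p B 0 ∨ K = coordSub p B 1 := by
    intro K hKi hKn
    have hor : K ≤ coordSub p B 0 ∨ K ≤ coordSub p B 1 := by
      by_contra hcon
      push_neg at hcon
      obtain ⟨h0, h1⟩ := hcon
      rw [SetLike.not_le_iff_exists] at h0 h1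
      obtain ⟨x, hxK, hx0⟩ := h0
      obtain ⟨y, hyK, hy1⟩ := h1
      rw [mem_coordSub] at hx0 hy1
      have hbx : (p : ℤ_[p]) ∣ B.repr (iotaP p x) 1 := (dich K hKn x hxK).resolve_left hx0
      have hay : (p : ℤ_[p]) ∣ B.repr (iotaP p y) 0 := (dich K hKn y hyK).resolve_right hy1
      rcases dich K hKn (x + y) (K.add_mem hxK hyK) with h | h
      · rw [map_add, map_add, Finsupp.add_apply] at h
        exact hx0 (by simpa using dvd_sub h hay)
      · rw [map_add, map_add, Finsupp.add_apply] at h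
        exact hy1 (by simpa using dvd_sub h hbx)
    have hidx : ∀ k : Fin 3, K ≤ coordSub p B k → K = coordSub p B k := by
      intro k hle
      have hd : (coordSub p B k).index ∣ p :=
        (AddSubgroup.index_dvd_of_le hle).trans (dvd_of_eq hKi)
      have hip : (coordSub p B k).index = p := by
        rcases hp.eq_one_or_self_of_dvd _ hd with h1 | h1
        · exact absurd (AddSubgroup.index_eq_one.mp h1) (coordSub_ne_top p B k)
        · exact h1
      exact eq_of_le_of_index_eq hle (hKi.trans hip.symm) (by rw [hip]; exact hp.pos.ne')
    rcases hor with h | h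
    · exact Or.inl (hidx 0 h)
    · exact Or.inr (hidx 1 h)
  -- the two subgroups are exactly the two coordinate subgroups, in some order
  have hcase : (K₁ = coordSub p B 0 ∧ K₂ = coordSub p B 1) ∨
      (K₁ = coordSub p B 1 ∧ K₂ = coordSub p B 0) := by
    rcases subAB K₁ h₁ hn₁ with e1 | e1 <;> rcases subAB K₂ h₂ hn₂ with e2 | e2
    · exact absurd (e1.trans e2.symm) hne
    · exact Or.inl ⟨e1, e2⟩
    · exact Or.inr ⟨e1, e2⟩
    · exact absurd (e1.trans e2.symm) hne
  -- the Lambda set equals the intersection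
  have hlam : LambdaSet p N =
      (↑(coordSub p B 0) : Set (Fin 3 → ℤ)) ∩ ↑(coordSub p B 1) := by
    ext x
    rw [Set.mem_inter_iff]
    exact (charLam x).trans (Iff.rfl)
  have hset : LambdaSet p N = (K₁ : Set (Fin 3 → ℤ)) ∩ (K₂ : Set (Fin 3 → ℤ)) := by
    rcases hcase with ⟨e1, e2⟩ | ⟨e1, e2⟩
    · rw [hlam, e1, e2]
    · rw [hlam, e1, e2, Set.inter_comm]
  refine ⟨hset, ?_, ?_, ?_⟩
  · exact relindex_inf_eq_p p (hp := hp) h₁ h₂ hne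
  · rw [inf_comm]
    exact relindex_inf_eq_p p (hp := hp) h₂ h₁ hne.symm
  -- norm ideal statement for j ≥ 2
  · intro h2j
    have hsub : ∀ x ∈ LambdaSet p N, ((p : ℤ) ^ 2) ∣ N.eval x := by
      intro x hx
      obtain ⟨ha, hb⟩ := (charLam x).mp hx
      have hdv : (p : ℤ_[p]) ^ 2 ∣ N.eval (iotaP p x) := by
        rw [key]
        refine dvd_add ?_ ?_
        · rw [pow_two]
          exact mul_dvd_mul ha hb
        · exact dvd_mul_of_dvd_left (dvd_mul_of_dvd_right (pow_dvd_pow _ h2j) δ) _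
      rw [← castEval] at hdv
      exact (PadicInt.pow_p_dvd_int_iff 2 _).mp hdv
    apply le_antisymm
    · simp only [TernaryForm.normIdeal]
      rw [Ideal.span_le]
      rintro _ ⟨x, hx, rfl⟩
      rw [SetLike.mem_coe, Ideal.mem_span_singleton]
      exact hsub x hx
    · have h1 : (1 : ℤ) ∈ Ideal.span (N.eval '' (Set.univ : Set (Fin 3 → ℤ))) :=
        Ideal.eq_top_iff_one _ |>.mp hNprim
      have hmul : ∀ y ∈ Ideal.span (N.eval '' (Set.univ : Set (Fin 3 → ℤ))),
          (p : ℤ) ^ 2 * y ∈ Ideal.span (N.eval '' LambdaSet p N) := by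
        intro y hy
        refine Submodule.span_induction (fun w hw => ?_) ?_
          (fun u v hu hv ihu ihv => ?_) (fun r u hu ihu => ?_) hy
        · obtain ⟨w', -, rfl⟩ := hw
          have he : (p : ℤ) ^ 2 * N.eval w' = N.eval ((p : ℤ) • w') :=
            (eval_smul N (p : ℤ) w').symm
          rw [he]
          refine Ideal.subset_span ⟨(p : ℤ) • w', ?_, rfl⟩
          have hsm : iotaP p ((p : ℤ) • w') = (p : ℤ_[p]) • iotaP p w' := by
            funext i
            simp only [iotaP, AddMonoidHom.coe_mk, ZeroHom.coe_mk, Pi.smul_apply,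
              smul_eq_mul]
            push_cast
            ring
          refine (charLam _).mpr ⟨?_, ?_⟩ <;>
            rw [hsm, map_smul, Finsupp.smul_apply, smul_eq_mul] <;>
            exact dvd_mul_right _ _
        · rw [mul_zero]
          exact zero_mem _
        · rw [mul_add]
          exact add_mem ihu ihv
        · rw [smul_eq_mul, show (p : ℤ) ^ 2 * (r * u) = r * ((p : ℤ) ^ 2 * u) by ring]
          exact Ideal.mul_mem_left _ _ ihu
      have hfin := hmul 1 h1
      rw [mul_one] at hfin
      simp only [TernaryForm.normIdeal]
      rw [Ideal.span_le, Set.singleton_subset_iff]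
      exact hfin
end

section
/- Let p be an odd prime and let N be a primitive positive definite ternary form such that there exist units ε₀, ε₁, ε₂ ∈ ℤ_p^× and a ℤ_p-basis y₁, y₂, y₃ of ℤ_p³ with Q_N(a y₁ + b y₂ + c y₃) = ε₀a² + pε₁b² + pε₂c² for all a, b, c ∈ ℤ_p. Then {x ∈ ℤ³ : p divides Q_N(x)} = Λ_p(N); in particular, for every positive integer k, the equation Q_N(x) = pk has a solution x ∈ ℤ³ if and only if it has a solution x ∈ Λ_p(N). -/
section Aux

variable {p : ℕ} [Fact p.Prime]

lemma int_dvd_iff_padic (n : ℤ) : (p : ℤ) ∣ n ↔ (p : ℤ_[p]) ∣ (n : ℤ_[p]) := by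
  rw [← PadicInt.norm_int_lt_one_iff_dvd, PadicInt.norm_lt_one_iff_dvd]

lemma eval_cast (N : TernaryForm) (x : Fin 3 → ℤ) :
    N.eval (fun i => ((x i : ℤ_[p]))) = ((N.eval x : ℤ) : ℤ_[p]) := by
  simp only [TernaryForm.eval]
  push_cast
  ring

lemma repr_eval (N : TernaryForm) {ε₀ ε₁ ε₂ : ℤ_[p]}
    (B : Module.Basis (Fin 3) ℤ_[p] (Fin 3 → ℤ_[p]))
    (hB : ∀ a b c : ℤ_[p], N.eval (a • B 0 + b • B 1 + c • B 2) =
      ε₀ * a ^ 2 + (p : ℤ_[p]) * ε₁ * b ^ 2 + (p : ℤ_[p]) * ε₂ * c ^ 2)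
    (w : Fin 3 → ℤ_[p]) :
    N.eval w = ε₀ * (B.repr w 0) ^ 2 + (p : ℤ_[p]) * ε₁ * (B.repr w 1) ^ 2 +
      (p : ℤ_[p]) * ε₂ * (B.repr w 2) ^ 2 := by
  have hw : w = (B.repr w 0) • B 0 + (B.repr w 1) • B 1 + (B.repr w 2) • B 2 := by
    conv_lhs => rw [← B.sum_repr w]
    rw [Fin.sum_univ_three]
  rw [← hB]
  exact congrArg N.eval hw

end Aux

/-- If `p` is odd and `N` is diagonalizable over `ℤ_p` as
`ε₀a² + pε₁b² + pε₂c²`, then `{x : p ∣ Q_N(x)} = Λ_p(N)`; in particular `Q_N(x) = pk`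
is solvable in `ℤ³` iff it is solvable in `Λ_p(N)`. -/
theorem stmt_13 (p : ℕ) [Fact p.Prime] (hodd : p ≠ 2) (N : TernaryForm)
    (hN : N.PosDef) (hNprim : N.Primitive)
    (h : ∃ ε₀ ε₁ ε₂ : ℤ_[p], IsUnit ε₀ ∧ IsUnit ε₁ ∧ IsUnit ε₂ ∧
      ∃ B : Module.Basis (Fin 3) ℤ_[p] (Fin 3 → ℤ_[p]),
        ∀ a b c : ℤ_[p], N.eval (a • B 0 + b • B 1 + c • B 2) =
          ε₀ * a ^ 2 + (p : ℤ_[p]) * ε₁ * b ^ 2 + (p : ℤ_[p]) * ε₂ * c ^ 2) :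
    {x : Fin 3 → ℤ | (p : ℤ) ∣ N.eval x} = LambdaSet p N ∧
      ∀ k : ℕ, 0 < k →
        ((∃ x : Fin 3 → ℤ, N.eval x = (p : ℤ) * k) ↔
          ∃ x ∈ LambdaSet p N, N.eval x = (p : ℤ) * k) := by
  obtain ⟨ε₀, ε₁, ε₂, hε₀, hε₁, hε₂, B, hB⟩ := h
  have hmain : {x : Fin 3 → ℤ | (p : ℤ) ∣ N.eval x} = LambdaSet p N := by
    ext x
    simp only [Set.mem_setOf_eq, LambdaSet]
    constructor
    · intro hx z
      -- work over ℤ_p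
      set xp : Fin 3 → ℤ_[p] := fun i => ((x i : ℤ_[p])) with hxp
      set zp : Fin 3 → ℤ_[p] := fun i => ((z i : ℤ_[p])) with hzp
      have hxz : (fun i => (((x + z) i : ℤ) : ℤ_[p])) = xp + zp := by
        funext i; simp [hxp, hzp]
      -- p divides the 0-th coordinate of xp
      have hQx : (p : ℤ_[p]) ∣ N.eval xp := by
        rw [eval_cast, ← int_dvd_iff_padic]; exact hx
      rw [repr_eval N B hB] at hQx
      have ha : (p : ℤ_[p]) ∣ B.repr xp 0 := by
        have h1 : (p : ℤ_[p]) ∣ ε₀ * (B.repr xp 0) ^ 2 := by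
          have d1 : (p : ℤ_[p]) ∣ (p : ℤ_[p]) * ε₁ * (B.repr xp 1) ^ 2 :=
            ⟨ε₁ * (B.repr xp 1) ^ 2, by ring⟩
          have d2 : (p : ℤ_[p]) ∣ (p : ℤ_[p]) * ε₂ * (B.repr xp 2) ^ 2 :=
            ⟨ε₂ * (B.repr xp 2) ^ 2, by ring⟩
          have := dvd_sub hQx (d1.add d2)
          simpa using this
        have h2 : (p : ℤ_[p]) ∣ (B.repr xp 0) ^ 2 :=
          hε₀.dvd_mul_left.mp h1
        exact (PadicInt.prime_p (p := p)).dvd_of_dvd_pow h2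
      obtain ⟨a₀, ha₀⟩ := ha
      -- compute the difference
      rw [int_dvd_iff_padic, Int.cast_sub, ← eval_cast, ← eval_cast, hxz]
      rw [repr_eval N B hB, repr_eval N B hB]
      simp only [map_add, Finsupp.add_apply]
      refine ⟨ε₀ * (p * a₀ ^ 2 + 2 * a₀ * B.repr zp 0) +
        ε₁ * ((B.repr xp 1) ^ 2 + 2 * B.repr xp 1 * B.repr zp 1) +
        ε₂ * ((B.repr xp 2) ^ 2 + 2 * B.repr xp 2 * B.repr zp 2), ?_⟩
      rw [ha₀]; ring
    · intro hx
      have := hx 0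
      simpa [TernaryForm.eval] using this
  refine ⟨hmain, fun k hk => ⟨fun ⟨x, hx⟩ => ?_, fun ⟨x, _, hx⟩ => ⟨x, hx⟩⟩⟩
  refine ⟨x, ?_, hx⟩
  rw [← hmain]
  exact ⟨k, hx⟩
end
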